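/- arXiv:2512.15797 — 9 statements merged into one kernel-verified Lean document; each statement's English description precedes it below -/
import Mathlib

section
/- For every positive integer n and every real x, the normalized remainder of the sine series satisfies the integral representation T_sin n x = (2n+1) ∫₀¹ (1-u)^{2n} cos(x·u) du. -/
/-- The `n`-th normalized remainder of the Maclaurin series of sine:
`T_sin n x = (-1)^n (2n+1)!/x^(2n+1) (sin x - ∑_{k<n} (-1)^k x^(2k+1)/(2k+1)!)` for `x ≠ 0`,
and `1` at `x = 0`. -/
noncomputable def Tsin (n : ℕ) (x : ℝ) : ℝ :=
  if x = 0 then 1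
  else (-1 : ℝ) ^ n * (Nat.factorial (2 * n + 1)) / x ^ (2 * n + 1) *
    (Real.sin x - ∑ k ∈ Finset.range n, (-1 : ℝ) ^ k * x ^ (2 * k + 1) / (Nat.factorial (2 * k + 1)))

open Real intervalIntegral Set

lemma hasDeriv_aux (m : ℕ) (c : ℝ) (hc : c = m + 1) (t : ℝ) :
    HasDerivAt (fun t : ℝ => -((1 - t) ^ (m + 1)) / c) ((1 - t) ^ m) t := by
  have h1 : HasDerivAt (fun t : ℝ => 1 - t) (-1) t := by
    simpa using (hasDerivAt_id t).const_sub 1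
  have h2 := ((h1.pow (m + 1)).div_const c).neg
  have hm : c ≠ 0 := by rw [hc]; positivity
  have heq : -(↑(m + 1) * (1 - t) ^ (m + 1 - 1) * -1 / c) = (1 - t) ^ m := by
    simp only [Nat.add_sub_cancel, hc]
    push_cast
    field_simp
  rw [show (fun t : ℝ => -((1 - t) ^ (m + 1)) / c)
      = fun t : ℝ => -((1 - t) ^ (m + 1) / c) from funext fun t => by rw [neg_div]]
  rw [← heq]
  exact h2

lemma cos_deriv_aux (x t : ℝ) :
    HasDerivAt (fun t => Real.cos (x * t)) (-x * Real.sin (x * t)) t := by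
  have h := (HasDerivAt.const_mul x (hasDerivAt_id t)).cos
  convert h using 1 <;> simp only [id, mul_one] <;> ring

lemma sin_deriv_aux (x t : ℝ) :
    HasDerivAt (fun t => Real.sin (x * t)) (x * Real.cos (x * t)) t := by
  have h := (HasDerivAt.const_mul x (hasDerivAt_id t)).sin
  convert h using 1 <;> simp only [id, mul_one] <;> ring

lemma step1 (m : ℕ) (x : ℝ) :
    ∫ u in (0:ℝ)..1, (1 - u) ^ m * Real.cos (x * u)
      = 1 / (m + 1) - x / (m + 1) * ∫ u in (0:ℝ)..1, (1 - u) ^ (m + 1) * Real.sin (x * u) := by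
  have hm : ((m : ℝ) + 1) ≠ 0 := by positivity
  have h := intervalIntegral.integral_mul_deriv_eq_deriv_mul_of_hasDerivAt
    (u := fun t => Real.cos (x * t)) (v := fun t => -((1 - t) ^ (m + 1)) / ((m : ℝ) + 1))
    (u' := fun t => -x * Real.sin (x * t)) (v' := fun t => (1 - t) ^ m)
    (a := 0) (b := 1)
    (by fun_prop) (by fun_prop)
    (fun t _ => cos_deriv_aux x t)
    (fun t _ => hasDeriv_aux m _ rfl t)
    (by apply Continuous.intervalIntegrable; fun_prop)
    (by apply Continuous.intervalIntegrable; fun_prop)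
  rw [show (∫ u in (0:ℝ)..1, (1 - u) ^ m * Real.cos (x * u))
      = ∫ u in (0:ℝ)..1, Real.cos (x * u) * (1 - u) ^ m by
    apply intervalIntegral.integral_congr; intro u _; ring]
  rw [h]
  rw [show (∫ u in (0:ℝ)..1, -x * Real.sin (x * u) * (-((1 - u) ^ (m + 1)) / ((m : ℝ) + 1)))
      = (x / (m + 1)) * ∫ u in (0:ℝ)..1, (1 - u) ^ (m + 1) * Real.sin (x * u) by
    rw [← intervalIntegral.integral_const_mul]
    apply intervalIntegral.integral_congr; intro u _; ring]
  field_simp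
  simp

lemma step2 (m : ℕ) (x : ℝ) :
    ∫ u in (0:ℝ)..1, (1 - u) ^ (m + 1) * Real.sin (x * u)
      = x / (m + 2) * ∫ u in (0:ℝ)..1, (1 - u) ^ (m + 2) * Real.cos (x * u) := by
  have hm : ((m : ℝ) + 2) ≠ 0 := by positivity
  have h := intervalIntegral.integral_mul_deriv_eq_deriv_mul_of_hasDerivAt
    (u := fun t => Real.sin (x * t)) (v := fun t => -((1 - t) ^ (m + 2)) / ((m : ℝ) + 2))
    (u' := fun t => x * Real.cos (x * t)) (v' := fun t => (1 - t) ^ (m + 1))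
    (a := 0) (b := 1)
    (by fun_prop) (by fun_prop)
    (fun t _ => sin_deriv_aux x t)
    (fun t _ => hasDeriv_aux (m + 1) _ (by push_cast; ring) t)
    (by apply Continuous.intervalIntegrable; fun_prop)
    (by apply Continuous.intervalIntegrable; fun_prop)
  rw [show (∫ u in (0:ℝ)..1, (1 - u) ^ (m + 1) * Real.sin (x * u))
      = ∫ u in (0:ℝ)..1, Real.sin (x * u) * (1 - u) ^ (m + 1) by
    apply intervalIntegral.integral_congr; intro u _; ring]
  rw [h]
  rw [show (∫ u in (0:ℝ)..1, x * Real.cos (x * u) * (-((1 - u) ^ (m + 2)) / ((m : ℝ) + 2)))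
      = (-(x / (m + 2))) * ∫ u in (0:ℝ)..1, (1 - u) ^ (m + 2) * Real.cos (x * u) by
    rw [← intervalIntegral.integral_const_mul]
    apply intervalIntegral.integral_congr; intro u _; ring]
  field_simp
  simp

lemma key (n : ℕ) (x : ℝ) :
    Real.sin x = (∑ k ∈ Finset.range n, (-1 : ℝ) ^ k * x ^ (2 * k + 1) / (Nat.factorial (2 * k + 1)))
      + (-1 : ℝ) ^ n * x ^ (2 * n + 1) / (Nat.factorial (2 * n))
        * ∫ u in (0:ℝ)..1, (1 - u) ^ (2 * n) * Real.cos (x * u) := by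
  induction n with
  | zero =>
    rcases eq_or_ne x 0 with hx | hx
    · simp [hx]
    · have hint : ∫ u in (0:ℝ)..1, (1 - u) ^ (2 * 0) * Real.cos (x * u) = Real.sin x / x := by
        simp only [Nat.mul_zero, pow_zero, one_mul]
        rw [intervalIntegral.integral_comp_mul_left Real.cos hx]
        simp [smul_eq_mul, div_eq_inv_mul]
      rw [hint]
      simp only [Finset.range_zero, Finset.sum_empty, zero_add, pow_zero, mul_zero,
        Nat.factorial_zero, Nat.cast_one, one_mul, pow_one, div_one]
      field_simp
  | succ n ih =>
    rw [Finset.sum_range_succ]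
    have hA := step1 (2 * n) x
    have hB := step2 (2 * n) x
    rw [hB] at hA
    rw [ih, hA]
    have h1 : (Nat.factorial (2 * (n + 1)) : ℝ)
        = (Nat.factorial (2 * n)) * (2 * n + 1) * (2 * n + 2) := by
      have h : 2 * (n + 1) = (2 * n + 1) + 1 := by ring
      rw [h, Nat.factorial_succ, Nat.factorial_succ]
      push_cast; ring
    have h2 : (Nat.factorial (2 * n + 1) : ℝ) = (Nat.factorial (2 * n)) * (2 * n + 1) := by
      rw [Nat.factorial_succ]; push_cast; ring
    have hf : (Nat.factorial (2 * n) : ℝ) ≠ 0 := by positivity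
    have h3 : (2 * (n : ℝ) + 1) ≠ 0 := by positivity
    have h4 : (2 * (n : ℝ) + 2) ≠ 0 := by positivity
    have hx1 : x ^ (2 * (n + 1) + 1) = x ^ (2 * n + 1) * x ^ 2 := by
      rw [← pow_add]; ring_nf
    have hx2 : (2 * (n + 1)) = (2 * n) + 1 + 1 := by ring
    rw [h1, h2, hx1, hx2]
    push_cast
    field_simp
    ring

theorem Tsin_integral_repr (n : ℕ) (hn : 0 < n) (x : ℝ) :
    Tsin n x = (2 * n + 1 : ℝ) * ∫ u in (0:ℝ)..1, (1 - u) ^ (2 * n) * Real.cos (x * u) := by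
  rcases eq_or_ne x 0 with hx | hx
  · subst hx
    simp only [Tsin, if_pos rfl]
    have hs := step1 (2 * n) 0
    simp only [zero_div, zero_mul, sub_zero, Real.cos_zero, mul_one] at hs ⊢
    rw [hs]
    push_cast
    field_simp
  · rw [Tsin, if_neg hx]
    have hk := key n x
    have hf : (Nat.factorial (2 * n) : ℝ) ≠ 0 := by positivity
    have hfs : (Nat.factorial (2 * n + 1) : ℝ) = (Nat.factorial (2 * n)) * (2 * n + 1) := by
      rw [Nat.factorial_succ]; push_cast; ring
    have hxp : x ^ (2 * n + 1) ≠ 0 := pow_ne_zero _ hx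
    rw [show Real.sin x - ∑ k ∈ Finset.range n, (-1 : ℝ) ^ k * x ^ (2 * k + 1) / (Nat.factorial (2 * k + 1))
        = (-1 : ℝ) ^ n * x ^ (2 * n + 1) / (Nat.factorial (2 * n))
          * ∫ u in (0:ℝ)..1, (1 - u) ^ (2 * n) * Real.cos (x * u) by
      rw [hk]; ring]
    rw [hfs]
    have hsq : ((-1 : ℝ) ^ n) * ((-1 : ℝ) ^ n) = 1 := by
      rw [← pow_add, ← two_mul, pow_mul]; norm_num
    generalize (∫ u in (0:ℝ)..1, (1 - u) ^ (2 * n) * Real.cos (x * u)) = I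
    field_simp
    linear_combination I * hsq
end

section
/- For every positive integer n and every real x, the normalized remainder of the cosine series satisfies the integral representation T_cos (2n) x = 2n ∫₀¹ (1-u)^{2n-1} cos(x·u) du. -/
open Real intervalIntegral

noncomputable def Icos (m : ℕ) (x : ℝ) : ℝ := ∫ u in (0:ℝ)..1, (1 - u) ^ m * Real.cos (x * u)
noncomputable def Jsin (m : ℕ) (x : ℝ) : ℝ := ∫ u in (0:ℝ)..1, (1 - u) ^ m * Real.sin (x * u)

lemma hasDerivAt_one_sub_pow (m : ℕ) (t : ℝ) :
    HasDerivAt (fun t : ℝ => (1 - t) ^ (m + 1)) (-((m+1) * (1 - t) ^ m)) t := by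
  have h : HasDerivAt (fun t : ℝ => 1 - t) (-1) t := by
    simpa using (hasDerivAt_id t).const_sub 1
  have := h.fun_pow (m + 1)
  simpa [mul_comm, mul_assoc, mul_left_comm] using this

lemma Icos_rec (m : ℕ) (x : ℝ) (hx : x ≠ 0) :
    Icos (m + 1) x = ((m + 1) / x) * Jsin m x := by
  have hv : ∀ t : ℝ, HasDerivAt (fun t : ℝ => Real.sin (x * t) / x) (Real.cos (x * t)) t := by
    intro t
    have h1 : HasDerivAt (fun t : ℝ => x * t) x t := by
      simpa using (hasDerivAt_id t).const_mul x
    have := ((Real.hasDerivAt_sin (x * t)).comp t h1).div_const x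
    simpa [mul_div_assoc, mul_div_cancel_left₀ _ hx, mul_comm] using this
  have key := intervalIntegral.integral_mul_deriv_eq_deriv_mul
    (u := fun t : ℝ => (1 - t) ^ (m + 1)) (u' := fun t : ℝ => -((m+1) * (1 - t) ^ m))
    (v := fun t : ℝ => Real.sin (x * t) / x) (v' := fun t : ℝ => Real.cos (x * t))
    (a := 0) (b := 1)
    (fun t _ => hasDerivAt_one_sub_pow m t) (fun t _ => hv t)
    (by apply Continuous.intervalIntegrable; continuity)
    (by apply Continuous.intervalIntegrable; continuity)
  simp only [Icos, Jsin]
  rw [key]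
  simp_rw [show ∀ t : ℝ, -(((m:ℝ)+1) * (1-t)^m) * (Real.sin (x*t)/x)
      = -(((m:ℝ)+1)/x * ((1-t)^m * Real.sin (x*t))) from fun t => by ring]
  rw [intervalIntegral.integral_neg, intervalIntegral.integral_const_mul]
  simp [sub_self, zero_pow (Nat.succ_ne_zero m)]

lemma Jsin_rec (m : ℕ) (x : ℝ) (hx : x ≠ 0) :
    Jsin (m + 1) x = 1 / x - ((m + 1) / x) * Icos m x := by
  have hv : ∀ t : ℝ, HasDerivAt (fun t : ℝ => -(Real.cos (x * t) / x)) (Real.sin (x * t)) t := by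
    intro t
    have h1 : HasDerivAt (fun t : ℝ => x * t) x t := by
      simpa using (hasDerivAt_id t).const_mul x
    have := (((Real.hasDerivAt_cos (x * t)).comp t h1).div_const x).fun_neg
    simpa [neg_div, mul_div_cancel_left₀ _ hx, mul_comm] using this
  have key := intervalIntegral.integral_mul_deriv_eq_deriv_mul
    (u := fun t : ℝ => (1 - t) ^ (m + 1)) (u' := fun t : ℝ => -((m+1) * (1 - t) ^ m))
    (v := fun t : ℝ => -(Real.cos (x * t) / x)) (v' := fun t : ℝ => Real.sin (x * t))
    (a := 0) (b := 1)
    (fun t _ => hasDerivAt_one_sub_pow m t) (fun t _ => hv t)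
    (by apply Continuous.intervalIntegrable; continuity)
    (by apply Continuous.intervalIntegrable; continuity)
  simp only [Jsin, Icos]
  rw [key]
  simp_rw [show ∀ t : ℝ, -(((m:ℝ)+1) * (1-t)^m) * -(Real.cos (x*t)/x)
      = ((m:ℝ)+1)/x * ((1-t)^m * Real.cos (x*t)) from fun t => by ring]
  rw [intervalIntegral.integral_const_mul]
  simp [sub_self, zero_pow (Nat.succ_ne_zero m)]

lemma Jsin_zero (x : ℝ) (hx : x ≠ 0) : Jsin 0 x = (1 - Real.cos x) / x := by
  simp only [Jsin, pow_zero, one_mul]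
  rw [intervalIntegral.integral_comp_mul_left (fun t => Real.sin t) hx]
  simp [integral_sin]
  field_simp

/-- The normalized remainder of the Maclaurin series of cosine:
`Tcos m x = (-1)^m (2m)!/x^(2m) (cos x - ∑_{k<m} (-1)^k x^(2k)/(2k)!)` for `x ≠ 0`,
and `1` at `x = 0`.  This is `T_cos (2m)` in the natural-language statement. -/
noncomputable def Tcos (m : ℕ) (x : ℝ) : ℝ :=
  if x = 0 then 1
  else (-1 : ℝ) ^ m * (Nat.factorial (2 * m)) / x ^ (2 * m) *
    (Real.cos x - ∑ k ∈ Finset.range m, (-1 : ℝ) ^ k * x ^ (2 * k) / (Nat.factorial (2 * k)))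

lemma Tcos_succ (m : ℕ) (x : ℝ) (hx : x ≠ 0) :
    Tcos (m + 1) x = ((2*m+2)*(2*m+1)/x^2) * (1 - Tcos m x) := by
  simp only [Tcos, if_neg hx, Finset.sum_range_succ]
  have hfac : (2 * (m+1)) = (2*m+1) + 1 := by omega
  have hfac2 : ((Nat.factorial (2 * (m+1)) : ℝ)) = (2*m+2) * ((2*m+1) * Nat.factorial (2*m)) := by
    rw [hfac, Nat.factorial_succ, Nat.factorial_succ]
    push_cast
    ring
  have hf0 : ((Nat.factorial (2*m) : ℝ)) ≠ 0 := by positivity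
  have hpow : x ^ (2 * (m+1)) = x ^ (2*m) * x ^ 2 := by ring
  rw [hfac2, hpow, pow_succ]
  have hxp : x ^ (2*m) ≠ 0 := pow_ne_zero _ hx
  rcases Nat.even_or_odd m with h | h
  · rw [h.neg_one_pow]
    field_simp
    ring
  · rw [h.neg_one_pow]
    field_simp
    ring

lemma Tcos_eq_Icos (m : ℕ) (x : ℝ) (hx : x ≠ 0) :
    Tcos (m + 1) x = (2*(m:ℝ)+2) * Icos (2*m+1) x := by
  induction m with
  | zero =>
    have h1 : Icos 1 x = (1/x) * ((1 - Real.cos x)/x) := by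
      have := Icos_rec 0 x hx
      rw [this, Jsin_zero x hx]
      push_cast
      ring
    simp only [Tcos, if_neg hx]
    rw [show (2*(0:ℕ)+1) = 1 from rfl] at *
    rw [h1]
    norm_num [Finset.sum_range_one]
    field_simp
    ring
  | succ n ih =>
    have h1 : Icos (2*(n+1)+1) x = ((2*(n:ℝ)+3)/x) * Jsin (2*n+2) x := by
      have := Icos_rec (2*n+2) x hx
      rw [show 2*(n+1)+1 = (2*n+2)+1 from by omega, this]
      push_cast; ring_nf
    have h2 : Jsin (2*n+2) x = 1/x - ((2*(n:ℝ)+2)/x) * Icos (2*n+1) x := by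
      have := Jsin_rec (2*n+1) x hx
      rw [show 2*n+2 = (2*n+1)+1 from rfl, this]
      push_cast; ring_nf
    have h3 := Tcos_succ (n+1) x hx
    rw [h3, ih, h1, h2]
    push_cast
    field_simp
    ring

theorem Tcos_integral_repr (n : ℕ) (hn : 0 < n) (x : ℝ) :
    Tcos n x = (2 * n : ℝ) * ∫ u in (0:ℝ)..1, (1 - u) ^ (2 * n - 1) * Real.cos (x * u) := by
  by_cases hx : x = 0
  · subst hx
    simp only [Tcos, if_pos rfl, zero_mul, Real.cos_zero, mul_one]
    have h1 : (∫ u in (0:ℝ)..1, (1 - u) ^ (2*n-1)) = ∫ t in (0:ℝ)..1, t ^ (2*n-1) := by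
      have := intervalIntegral.integral_comp_sub_left (a := 0) (b := 1)
        (fun t : ℝ => t ^ (2*n-1)) 1
      simpa using this
    rw [h1, integral_pow]
    have h2 : ((2*n-1 : ℕ) : ℝ) + 1 = 2*n := by
      have : 1 ≤ 2*n := by omega
      push_cast [Nat.cast_sub this]
      ring
    rw [h2]
    have hn' : (n:ℝ) ≠ 0 := Nat.cast_ne_zero.mpr hn.ne'
    norm_num
    field_simp
  · obtain ⟨m, rfl⟩ : ∃ m, n = m + 1 := ⟨n - 1, by omega⟩
    have := Tcos_eq_Icos m x hx
    rw [show 2*(m+1)-1 = 2*m+1 from by omega]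
    rw [this]
    simp only [Icos]
    push_cast
    ring
end

section
/- For every positive integer n, the function x ↦ T_sin n x is positive and strictly decreasing on the interval (0, ∞), and it is concave on the interval (0, π). -/
open Set Real Finset

noncomputable def Psin (n : ℕ) (x : ℝ) : ℝ :=
  (-1 : ℝ) ^ n * (Real.sin x - ∑ k ∈ Finset.range n, (-1 : ℝ) ^ k * x ^ (2 * k + 1) / (Nat.factorial (2 * k + 1)))

noncomputable def Kcos (n : ℕ) (x : ℝ) : ℝ :=
  (-1 : ℝ) ^ n * (Real.cos x - ∑ k ∈ Finset.range n, (-1 : ℝ) ^ k * x ^ (2 * k) / (Nat.factorial (2 * k)))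

lemma Psin_zero (n : ℕ) : Psin n 0 = 0 := by
  have h : ∀ k ∈ Finset.range n, (-1 : ℝ) ^ k * (0:ℝ) ^ (2 * k + 1) / (Nat.factorial (2 * k + 1)) = 0 := by
    intro k _; simp
  simp [Psin, Finset.sum_eq_zero h]

lemma Kcos_zero (n : ℕ) : Kcos (n + 1) 0 = 0 := by
  rw [Kcos, Finset.sum_range_succ']
  have h : ∀ k ∈ Finset.range n, (-1 : ℝ) ^ (k+1) * (0:ℝ) ^ (2 * (k+1)) / (Nat.factorial (2 * (k+1))) = 0 := by
    intro k _
    have : 2 * (k+1) ≠ 0 := by omega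
    simp [zero_pow this]
  simp [Finset.sum_eq_zero h]

lemma hasDerivAt_Psin (n : ℕ) (x : ℝ) : HasDerivAt (Psin n) (Kcos n x) x := by
  have hsum : HasDerivAt (fun y : ℝ => ∑ k ∈ Finset.range n, (-1 : ℝ) ^ k * y ^ (2 * k + 1) / (Nat.factorial (2 * k + 1)))
      (∑ k ∈ Finset.range n, (-1 : ℝ) ^ k * x ^ (2 * k) / (Nat.factorial (2 * k))) x := by
    have h : ∀ k ∈ Finset.range n,
        HasDerivAt (fun y : ℝ => (-1 : ℝ) ^ k * y ^ (2 * k + 1) / (Nat.factorial (2 * k + 1)))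
          ((-1 : ℝ) ^ k * x ^ (2 * k) / (Nat.factorial (2 * k))) x := by
      intro k _
      have h1 : HasDerivAt (fun y : ℝ => y ^ (2 * k + 1)) ((2 * k + 1 : ℕ) * x ^ (2 * k)) x := by
        simpa using hasDerivAt_pow (2 * k + 1) x
      have h2 := (h1.const_mul ((-1 : ℝ) ^ k)).div_const ((Nat.factorial (2 * k + 1) : ℝ))
      convert! h2 using 1
      rw [show (2 * k + 1).factorial = (2 * k + 1) * (2 * k).factorial from rfl]
      have hk : ((2 * k).factorial : ℝ) ≠ 0 := by positivity
      field_simp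
      push_cast
      ring
    exact HasDerivAt.fun_sum h
  have := ((Real.hasDerivAt_sin x).fun_sub hsum).const_mul ((-1 : ℝ) ^ n)
  exact this

lemma hasDerivAt_Kcos (n : ℕ) (x : ℝ) : HasDerivAt (Kcos (n + 1)) (Psin n x) x := by
  have hsum : HasDerivAt (fun y : ℝ => ∑ k ∈ Finset.range (n+1), (-1 : ℝ) ^ k * y ^ (2 * k) / (Nat.factorial (2 * k)))
      (∑ k ∈ Finset.range (n+1), (-1 : ℝ) ^ k * ((2 * k : ℕ) * x ^ (2 * k - 1)) / (Nat.factorial (2 * k))) x := by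
    have h : ∀ k ∈ Finset.range (n+1),
        HasDerivAt (fun y : ℝ => (-1 : ℝ) ^ k * y ^ (2 * k) / (Nat.factorial (2 * k)))
          ((-1 : ℝ) ^ k * ((2 * k : ℕ) * x ^ (2 * k - 1)) / (Nat.factorial (2 * k))) x := by
      intro k _
      exact ((hasDerivAt_pow (2 * k) x).const_mul ((-1 : ℝ) ^ k)).div_const _
    exact HasDerivAt.fun_sum h
  have hval : (∑ k ∈ Finset.range (n+1), (-1 : ℝ) ^ k * ((2 * k : ℕ) * x ^ (2 * k - 1)) / (Nat.factorial (2 * k)))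
      = - ∑ k ∈ Finset.range n, (-1 : ℝ) ^ k * x ^ (2 * k + 1) / (Nat.factorial (2 * k + 1)) := by
    rw [Finset.sum_range_succ']
    simp only [Nat.mul_zero, Nat.cast_zero, pow_zero, zero_mul, mul_zero, zero_div, add_zero,
      Nat.factorial_zero, one_mul]
    rw [← Finset.sum_neg_distrib]
    refine Finset.sum_congr rfl fun k _ => ?_
    have he : 2 * (k + 1) - 1 = 2 * k + 1 := by omega
    have hf : (2 * (k+1)).factorial = (2 * k + 2) * (2 * k + 1).factorial := by
      rw [show 2 * (k+1) = (2 * k + 1) + 1 by ring, Nat.factorial_succ]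
    rw [he, hf]
    have h1 : ((2 * k + 1).factorial : ℝ) ≠ 0 := by positivity
    push_cast
    field_simp
    ring
  rw [hval] at hsum
  have := ((Real.hasDerivAt_cos x).fun_sub hsum).const_mul ((-1 : ℝ) ^ (n + 1))
  have heq : (-1 : ℝ) ^ (n+1) * (-Real.sin x - -∑ k ∈ Finset.range n, (-1 : ℝ) ^ k * x ^ (2 * k + 1) / (Nat.factorial (2 * k + 1))) = Psin n x := by
    rw [Psin, pow_succ]
    ring
  rw [heq] at this
  exact this

/-- If `f 0 = 0` and `f' > 0` on `(0, ∞)`, then `f > 0` on `(0, ∞)`. -/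
lemma pos_on_Ioi {f f' : ℝ → ℝ} (hd : ∀ x, HasDerivAt f (f' x) x) (h0 : f 0 = 0)
    (hp : ∀ x, 0 < x → 0 < f' x) : ∀ x, 0 < x → 0 < f x := by
  have hmono : StrictMonoOn f (Set.Ici 0) := by
    refine strictMonoOn_of_deriv_pos (convex_Ici 0)
      (fun x _ => (hd x).continuousAt.continuousWithinAt) ?_
    intro x hx
    rw [interior_Ici] at hx
    rw [(hd x).deriv]
    exact hp x hx
  intro x hx
  have := hmono (Set.self_mem_Ici) (Set.mem_Ici.2 hx.le) hx
  rwa [h0] at this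

/-- If `f 0 = 0` and `f' > 0` on `(0, b)`, then `f > 0` on `(0, b]`. -/
lemma pos_on_Ioc {f f' : ℝ → ℝ} {b : ℝ} (hb : 0 < b) (hd : ∀ x, HasDerivAt f (f' x) x)
    (h0 : f 0 = 0) (hp : ∀ x, 0 < x → x < b → 0 < f' x) :
    ∀ x, 0 < x → x ≤ b → 0 < f x := by
  have hmono : StrictMonoOn f (Set.Icc 0 b) := by
    refine strictMonoOn_of_deriv_pos (convex_Icc 0 b)
      (fun x _ => (hd x).continuousAt.continuousWithinAt) ?_
    intro x hx
    rw [interior_Icc] at hx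
    rw [(hd x).deriv]
    exact hp x hx.1 hx.2
  intro x hx hxb
  have := hmono (Set.left_mem_Icc.2 hb.le) (Set.mem_Icc.2 ⟨hx.le, hxb⟩) hx
  rwa [h0] at this

lemma Psin_pos : ∀ m, ∀ x : ℝ, 0 < x → 0 < Psin (m + 1) x := by
  intro m
  induction m with
  | zero =>
      intro x hx
      have h := Real.sin_lt hx
      have he : Psin (0 + 1) x = x - Real.sin x := by
        rw [Psin, Finset.sum_range_one]
        norm_num
      rw [he]
      linarith
  | succ m ih =>
      have hK : ∀ x : ℝ, 0 < x → 0 < Kcos (m + 2) x :=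
        pos_on_Ioi (hasDerivAt_Kcos (m + 1)) (Kcos_zero (m + 1)) ih
      exact pos_on_Ioi (hasDerivAt_Psin (m + 2)) (Psin_zero (m + 2)) hK

noncomputable def Dfun (m : ℕ) (x : ℝ) : ℝ := (2 * m + 3) * Psin (m + 1) x - x * Kcos (m + 1) x
noncomputable def Efun (m : ℕ) (x : ℝ) : ℝ := (2 * m + 2) * Kcos (m + 1) x - x * Psin m x

lemma hasDerivAt_Dfun (m : ℕ) (x : ℝ) : HasDerivAt (Dfun m) (Efun m x) x := by
  unfold Dfun Efun
  have h := ((hasDerivAt_Psin (m + 1) x).const_mul (2 * (m:ℝ) + 3)).fun_sub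
    ((hasDerivAt_id' (x := x)).fun_mul (hasDerivAt_Kcos m x))
  convert! h using 1
  ring

lemma hasDerivAt_Efun (m : ℕ) (x : ℝ) : HasDerivAt (Efun (m + 1)) (Dfun m x) x := by
  unfold Dfun Efun
  have h := ((hasDerivAt_Kcos (m + 1) x).const_mul (2 * (((m+1:ℕ)):ℝ) + 2)).fun_sub
    ((hasDerivAt_id' (x := x)).fun_mul (hasDerivAt_Psin (m + 1) x))
  convert! h using 1
  push_cast
  ring

lemma Dfun_zero (m : ℕ) : Dfun m 0 = 0 := by
  simp [Dfun, Psin_zero]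

lemma Efun_zero (m : ℕ) : Efun (m + 1) 0 = 0 := by
  simp [Efun, Kcos_zero]

lemma sin_sub_cos_pos : ∀ x : ℝ, 0 < x → x ≤ π → 0 < Real.sin x - x * Real.cos x := by
  have hd : ∀ x : ℝ, HasDerivAt (fun t => Real.sin t - t * Real.cos t) (x * Real.sin x) x := by
    intro x
    have := (Real.hasDerivAt_sin x).fun_sub ((hasDerivAt_id' (x := x)).fun_mul (Real.hasDerivAt_cos x))
    convert! this using 1; ring
  refine pos_on_Ioc Real.pi_pos hd (by simp) ?_
  intro x hx hxpi
  exact mul_pos hx (Real.sin_pos_of_pos_of_lt_pi hx hxpi)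

lemma Dfun0_pos : ∀ x : ℝ, 0 < x → 0 < Dfun 0 x := by
  have hD1 : ∀ x : ℝ, 0 < x → x ≤ π → 0 < 2 * x - 3 * Real.sin x + x * Real.cos x := by
    have hd' : ∀ x : ℝ, HasDerivAt (fun t => 2 - 2 * Real.cos t - t * Real.sin t)
        (Real.sin x - x * Real.cos x) x := by
      intro x
      have := ((hasDerivAt_const x (2:ℝ)).fun_sub ((Real.hasDerivAt_cos x).const_mul (2:ℝ))).fun_sub
        ((hasDerivAt_id' (x := x)).fun_mul (Real.hasDerivAt_sin x))
      convert! this using 1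
      ring
    have hD1' : ∀ x : ℝ, 0 < x → x ≤ π → 0 < 2 - 2 * Real.cos x - x * Real.sin x := by
      refine pos_on_Ioc Real.pi_pos hd' (by simp) ?_
      intro x hx hxpi
      exact sin_sub_cos_pos x hx hxpi.le
    have hd : ∀ x : ℝ, HasDerivAt (fun t => 2 * t - 3 * Real.sin t + t * Real.cos t)
        (2 - 2 * Real.cos x - x * Real.sin x) x := by
      intro x
      have := (((hasDerivAt_id' (x := x)).const_mul (2:ℝ)).fun_sub ((Real.hasDerivAt_sin x).const_mul 3)).fun_add
        ((hasDerivAt_id' (x := x)).fun_mul (Real.hasDerivAt_cos x))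
      convert! this using 1
      ring
    refine pos_on_Ioc Real.pi_pos hd (by simp) ?_
    intro x hx hxpi
    exact hD1' x hx hxpi.le
  intro x hx
  have hexp : Dfun 0 x = 2 * x - 3 * Real.sin x + x * Real.cos x := by
    simp [Dfun, Psin, Kcos, Finset.sum_range_one]
    ring
  rw [hexp]
  rcases le_or_gt x π with h | h
  · exact hD1 x hx h
  · have h3 : (3:ℝ) < π := Real.pi_gt_three
    have hc := Real.neg_one_le_cos x
    have hs := Real.sin_le_one x
    nlinarith

lemma Dfun_pos : ∀ m, ∀ x : ℝ, 0 < x → 0 < Dfun m x := by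
  intro m
  induction m with
  | zero => exact Dfun0_pos
  | succ m ih =>
      have hE : ∀ x : ℝ, 0 < x → 0 < Efun (m + 1) x :=
        pos_on_Ioi (hasDerivAt_Efun m) (Efun_zero m) ih
      exact pos_on_Ioi (hasDerivAt_Dfun (m + 1)) (Dfun_zero (m + 1)) hE

noncomputable def Ffun (m : ℕ) (x : ℝ) : ℝ :=
  2 * (2 * m + 3) * x * Kcos (m + 1) x - x ^ 2 * Psin m x - (2 * m + 3) * (2 * m + 4) * Psin (m + 1) x

noncomputable def Gfun (m : ℕ) (x : ℝ) : ℝ :=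
  -((2 * m + 4) * (2 * m + 5)) * Kcos (m + 2) x + (4 * m + 8) * x * Psin (m + 1) x - x ^ 2 * Kcos (m + 1) x

lemma Ffun_zero (m : ℕ) : Ffun m 0 = 0 := by
  simp [Ffun, Psin_zero]

lemma Gfun_zero (m : ℕ) : Gfun m 0 = 0 := by
  simp [Gfun, Kcos_zero]

lemma hasDerivAt_Ffun (m : ℕ) (x : ℝ) : HasDerivAt (Ffun (m + 1)) (Gfun m x) x := by
  unfold Ffun Gfun
  simp only [show m + 1 + 1 = m + 2 from rfl]
  have h := (((((hasDerivAt_id' (x := x)).fun_mul (hasDerivAt_Kcos (m + 1) x)).const_mul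
      (2 * (2 * (((m+1:ℕ)):ℝ) + 3))).fun_sub
      ((hasDerivAt_pow 2 x).fun_mul (hasDerivAt_Psin (m + 1) x))).fun_sub
      ((hasDerivAt_Psin (m + 2) x).const_mul ((2 * (((m+1:ℕ)):ℝ) + 3) * (2 * (((m+1:ℕ)):ℝ) + 4))))
  simp only [show m + 1 + 1 = m + 2 from rfl] at h
  convert! h using 1
  · funext y; push_cast; ring
  · push_cast; ring

lemma hasDerivAt_Gfun (m : ℕ) (x : ℝ) : HasDerivAt (Gfun m) (Ffun m x) x := by
  unfold Ffun Gfun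
  have h := ((((hasDerivAt_Kcos (m + 1) x).const_mul
      (-((2 * ((m:ℕ):ℝ) + 4) * (2 * ((m:ℕ):ℝ) + 5)))).fun_add
      (((hasDerivAt_id' (x := x)).fun_mul (hasDerivAt_Psin (m + 1) x)).const_mul
      (4 * ((m:ℕ):ℝ) + 8))).fun_sub
      ((hasDerivAt_pow 2 x).fun_mul (hasDerivAt_Kcos m x)))
  simp only [show m + 1 + 1 = m + 2 from rfl] at h
  convert! h using 1
  · funext y; ring
  · ring

lemma g_aux_pos : ∀ t : ℝ, 0 < t → t ≤ π / 2 → 0 < (3 - t ^ 2) * Real.sin t - 3 * t * Real.cos t := by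
  have hd : ∀ t : ℝ, HasDerivAt (fun s => (3 - s ^ 2) * Real.sin s - 3 * s * Real.cos s)
      (t * (Real.sin t - t * Real.cos t)) t := by
    intro t
    have h := (((hasDerivAt_const t (3:ℝ)).fun_sub (hasDerivAt_pow 2 t)).fun_mul (Real.hasDerivAt_sin t)).fun_sub
      (((hasDerivAt_id' (x := t)).const_mul (3:ℝ)).fun_mul (Real.hasDerivAt_cos t))
    convert! h using 1
    push_cast
    ring
  refine pos_on_Ioc (by positivity) hd (by simp) ?_
  intro t ht htp
  have h2 : t ≤ π := by linarith [Real.pi_pos]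
  exact mul_pos ht (sin_sub_cos_pos t ht h2)

lemma Ffun0_pos : ∀ x : ℝ, 0 < x → x < π → 0 < Ffun 0 x := by
  intro x hx hxpi
  have hs : Real.sin x = 2 * Real.sin (x / 2) * Real.cos (x / 2) := by
    have := Real.sin_two_mul (x / 2)
    rw [show 2 * (x / 2) = x by ring] at this
    linarith
  have hc : Real.cos x = 2 * Real.cos (x / 2) ^ 2 - 1 := by
    have := Real.cos_two_mul (x / 2)
    rw [show 2 * (x / 2) = x by ring] at this
    linarith
  have key : Ffun 0 x = 8 * Real.cos (x / 2) *
      ((3 - (x / 2) ^ 2) * Real.sin (x / 2) - 3 * (x / 2) * Real.cos (x / 2)) := by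
    have e1 : Kcos 1 x = 1 - Real.cos x := by
      rw [Kcos, Finset.sum_range_one]; norm_num
    have e2 : Psin 0 x = Real.sin x := by
      rw [Psin]; norm_num
    have e3 : Psin 1 x = x - Real.sin x := by
      rw [Psin, Finset.sum_range_one]; norm_num
    rw [Ffun, e1, e2, e3, hs, hc]
    norm_num
    ring
  have hcpos : 0 < Real.cos (x / 2) := by
    apply Real.cos_pos_of_mem_Ioo
    constructor <;> [linarith [Real.pi_pos]; linarith]
  have hg := g_aux_pos (x / 2) (by linarith) (by linarith)
  rw [key]
  positivity

lemma Ffun_pos : ∀ m, ∀ x : ℝ, 0 < x → x < π → 0 < Ffun m x := by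
  intro m
  induction m with
  | zero => exact Ffun0_pos
  | succ m ih =>
      have hG : ∀ x : ℝ, 0 < x → x ≤ π → 0 < Gfun m x :=
        pos_on_Ioc Real.pi_pos (hasDerivAt_Gfun m) (Gfun_zero m) ih
      intro x hx hxpi
      exact pos_on_Ioc Real.pi_pos (hasDerivAt_Ffun m) (Ffun_zero (m + 1))
        (fun y hy hypi => hG y hy hypi.le) x hx hxpi.le

lemma Tsin_eq (n : ℕ) {x : ℝ} (hx : x ≠ 0) :
    Tsin n x = (Nat.factorial (2 * n + 1) : ℝ) * Psin n x / x ^ (2 * n + 1) := by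
  rw [Tsin, if_neg hx, Psin]
  ring

noncomputable def T1fun (m : ℕ) (x : ℝ) : ℝ :=
  -((Nat.factorial (2 * (m + 1) + 1) : ℝ) * Dfun m x) / x ^ (2 * m + 4)

noncomputable def T2fun (m : ℕ) (x : ℝ) : ℝ :=
  -((Nat.factorial (2 * (m + 1) + 1) : ℝ) * Ffun m x) / x ^ (2 * m + 5)

lemma hasDerivAt_Tsin (m : ℕ) {x : ℝ} (hx : x ≠ 0) :
    HasDerivAt (Tsin (m + 1)) (T1fun m x) x := by
  set c : ℝ := (Nat.factorial (2 * (m + 1) + 1) : ℝ) with hc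
  have hnum := (hasDerivAt_Psin (m + 1) x).const_mul c
  have h := hnum.fun_div (hasDerivAt_pow (2 * (m + 1) + 1) x) (pow_ne_zero _ hx)
  have heq : Tsin (m + 1) =ᶠ[nhds x] fun y => c * Psin (m + 1) y / y ^ (2 * (m + 1) + 1) := by
    filter_upwards [isOpen_ne.mem_nhds hx] with y hy
    exact Tsin_eq (m + 1) hy
  have h2 := h.congr_of_eventuallyEq heq
  convert! h2 using 1
  rw [T1fun, Dfun, ← hc]
  have he : 2 * (m + 1) + 1 - 1 = 2 * m + 2 := by omega
  rw [he]
  have hx4 : x ^ (2 * m + 4) ≠ 0 := pow_ne_zero _ hx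
  have hxp : x ^ (2 * (m + 1) + 1) ≠ 0 := pow_ne_zero _ hx
  field_simp
  push_cast
  ring

lemma hasDerivAt_T1fun (m : ℕ) {x : ℝ} (hx : x ≠ 0) :
    HasDerivAt (T1fun m) (T2fun m x) x := by
  set c : ℝ := (Nat.factorial (2 * (m + 1) + 1) : ℝ) with hc
  have hnum : HasDerivAt (fun y => -(c * Dfun m y)) (-(c * Efun m x)) x :=
    ((hasDerivAt_Dfun m x).const_mul c).neg
  have h := hnum.fun_div (hasDerivAt_pow (2 * m + 4) x) (pow_ne_zero _ hx)
  have h2 : T1fun m = fun y => -(c * Dfun m y) / y ^ (2 * m + 4) := rfl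
  rw [h2]
  convert! h using 1
  rw [T2fun, Dfun, Efun, Ffun, ← hc]
  have he : 2 * m + 4 - 1 = 2 * m + 3 := by omega
  rw [he]
  have hx5 : x ^ (2 * m + 5) ≠ 0 := pow_ne_zero _ hx
  have hxp : x ^ (2 * m + 4) ≠ 0 := pow_ne_zero _ hx
  field_simp
  push_cast
  ring

theorem Tsin_pos_strictAnti_concave (n : ℕ) (hn : 0 < n) :
    (∀ x ∈ Set.Ioi (0:ℝ), 0 < Tsin n x) ∧
    StrictAntiOn (Tsin n) (Set.Ioi (0:ℝ)) ∧
    ConcaveOn ℝ (Set.Ioo 0 Real.pi) (Tsin n) := by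
  obtain ⟨m, rfl⟩ : ∃ m, n = m + 1 := ⟨n - 1, by omega⟩
  have hfact : (0:ℝ) < (Nat.factorial (2 * (m + 1) + 1) : ℝ) := by positivity
  refine ⟨?_, ?_, ?_⟩
  · intro x hx
    rw [Set.mem_Ioi] at hx
    rw [Tsin_eq (m + 1) (ne_of_gt hx)]
    exact div_pos (mul_pos hfact (Psin_pos m x hx)) (pow_pos hx _)
  · refine strictAntiOn_of_deriv_neg (convex_Ioi 0) ?_ ?_
    · intro x hx
      exact (hasDerivAt_Tsin m (ne_of_gt (Set.mem_Ioi.1 hx))).continuousAt.continuousWithinAt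
    · intro x hx
      rw [interior_Ioi, Set.mem_Ioi] at hx
      rw [(hasDerivAt_Tsin m (ne_of_gt hx)).deriv]
      rw [T1fun]
      apply div_neg_of_neg_of_pos
      · exact neg_lt_zero.2 (mul_pos hfact (Dfun_pos m x hx))
      · exact pow_pos hx _
  · have hderiv_eq : ∀ y : ℝ, y ≠ 0 → deriv (Tsin (m + 1)) y = T1fun m y := fun y hy =>
      (hasDerivAt_Tsin m hy).deriv
    have hderiv2 : ∀ x : ℝ, x ≠ 0 → HasDerivAt (deriv (Tsin (m + 1))) (T2fun m x) x := by
      intro x hx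
      refine (hasDerivAt_T1fun m hx).congr_of_eventuallyEq ?_
      filter_upwards [isOpen_ne.mem_nhds hx] with y hy
      exact hderiv_eq y hy
    refine concaveOn_of_deriv2_nonpos (convex_Ioo 0 π) ?_ ?_ ?_ ?_
    · intro x hx
      exact (hasDerivAt_Tsin m (ne_of_gt hx.1)).continuousAt.continuousWithinAt
    · intro x hx
      rw [interior_Ioo] at hx
      exact ((hasDerivAt_Tsin m (ne_of_gt hx.1)).differentiableAt).differentiableWithinAt
    · intro x hx
      rw [interior_Ioo] at hx
      exact ((hderiv2 x (ne_of_gt hx.1)).differentiableAt).differentiableWithinAt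
    · intro x hx
      rw [interior_Ioo] at hx
      have h2 : deriv^[2] (Tsin (m + 1)) x = deriv (deriv (Tsin (m + 1))) x := rfl
      rw [h2, (hderiv2 x (ne_of_gt hx.1)).deriv, T2fun]
      apply div_nonpos_of_nonpos_of_nonneg
      · exact neg_nonpos.2 (le_of_lt (mul_pos hfact (Ffun_pos m x hx.1 hx.2)))
      · exact le_of_lt (pow_pos hx.1 _)
end

section
/- For every integer n ≥ 2, the function x ↦ T_cos (2n) x is positive and strictly decreasing on the interval (0, ∞), and it is concave on the interval (0, π). -/
open Real Finset

noncomputable def pc (m : ℕ) (x : ℝ) : ℝ :=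
  ∑ k ∈ Finset.range m, (-1 : ℝ) ^ k * x ^ (2 * k) / (Nat.factorial (2 * k))

noncomputable def ps (m : ℕ) (x : ℝ) : ℝ :=
  ∑ k ∈ Finset.range m, (-1 : ℝ) ^ k * x ^ (2 * k + 1) / (Nat.factorial (2 * k + 1))

noncomputable def Cc (m : ℕ) (x : ℝ) : ℝ := (-1) ^ m * (Real.cos x - pc m x)
noncomputable def Ss (m : ℕ) (x : ℝ) : ℝ := (-1) ^ m * (Real.sin x - ps m x)
noncomputable def Gg (m : ℕ) (x : ℝ) : ℝ := (2 * (m:ℝ) + 2) * Cc (m+1) x - x * Ss m x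
noncomputable def Hh (m : ℕ) (x : ℝ) : ℝ := (2 * (m:ℝ) + 1) * Ss m x - x * Cc m x
noncomputable def Kk (m : ℕ) (x : ℝ) : ℝ := x * Hh m x - (2 * (m:ℝ) + 3) * Gg m x
noncomputable def Ll (m : ℕ) (x : ℝ) : ℝ := x * Gg m x - (2 * (m:ℝ) + 4) * Hh (m+1) x

lemma fact_ne (k : ℕ) : ((Nat.factorial k : ℝ)) ≠ 0 :=
  Nat.cast_ne_zero.mpr (Nat.factorial_ne_zero k)

lemma hasDerivAt_ps (m : ℕ) (x : ℝ) : HasDerivAt (ps m) (pc m x) x := by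
  unfold ps pc
  apply HasDerivAt.fun_sum
  intro k _
  have h := ((hasDerivAt_pow (2*k+1) x).const_mul ((-1:ℝ)^k)).div_const
      ((Nat.factorial (2*k+1) : ℝ))
  convert h using 1
  · exact rfl
  rw [show 2*k+1-1 = 2*k by omega, Nat.factorial_succ]
  have h1 := fact_ne (2*k)
  push_cast
  field_simp

lemma hasDerivAt_pc_succ (m : ℕ) (x : ℝ) : HasDerivAt (pc (m+1)) (-(ps m x)) x := by
  unfold ps pc
  have h : HasDerivAt (fun y : ℝ => ∑ k ∈ Finset.range (m+1),
      (-1:ℝ)^k * y^(2*k) / (Nat.factorial (2*k)))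
      (∑ k ∈ Finset.range (m+1), (-1:ℝ)^k * ((2*k:ℕ) * x^(2*k-1)) / (Nat.factorial (2*k))) x := by
    apply HasDerivAt.fun_sum
    intro k _
    exact ((hasDerivAt_pow (2*k) x).const_mul ((-1:ℝ)^k)).div_const _
  convert h using 1
  rw [Finset.sum_range_succ' _ m]
  simp only [Nat.mul_zero, pow_zero, Nat.cast_zero, zero_mul, mul_zero, zero_div, add_zero]
  rw [← Finset.sum_neg_distrib]
  apply Finset.sum_congr rfl
  intro k _
  have hf2 : ((Nat.factorial (2*(k+1)) : ℝ)) = (2*(k:ℝ)+2) * (Nat.factorial (2*k+1) : ℝ) := by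
    rw [show 2*(k+1) = (2*k+1)+1 by omega, Nat.factorial_succ]; push_cast; ring
  rw [show 2*(k+1)-1 = 2*k+1 by omega, hf2]
  have h1 := fact_ne (2*k+1)
  push_cast
  field_simp
  ring

lemma hasDerivAt_Ss (m : ℕ) (x : ℝ) : HasDerivAt (Ss m) (Cc m x) x := by
  unfold Ss Cc
  exact ((Real.hasDerivAt_sin x).sub (hasDerivAt_ps m x)).const_mul _

lemma hasDerivAt_Cc (m : ℕ) (x : ℝ) : HasDerivAt (Cc (m+1)) (Ss m x) x := by
  have h := ((Real.hasDerivAt_cos x).sub (hasDerivAt_pc_succ m x)).const_mul ((-1:ℝ)^(m+1))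
  convert h using 1
  · exact rfl
  · exact rfl
  · exact rfl
  unfold Ss
  rw [pow_succ]
  ring

lemma hasDerivAt_Gg (m : ℕ) (x : ℝ) : HasDerivAt (Gg m) (Hh m x) x := by
  have h := ((hasDerivAt_Cc m x).const_mul (2*(m:ℝ)+2)).sub
    ((hasDerivAt_id x).mul (hasDerivAt_Ss m x))
  convert h using 1
  · exact rfl
  · exact rfl
  · exact rfl
  simp only [id]
  unfold Hh
  ring

lemma hasDerivAt_Hh (m : ℕ) (x : ℝ) : HasDerivAt (Hh (m+1)) (Gg m x) x := by
  have h := ((hasDerivAt_Ss (m+1) x).const_mul (2*((m:ℝ)+1)+1)).sub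
    ((hasDerivAt_id x).mul (hasDerivAt_Cc m x))
  convert h using 1
  · exact rfl
  · exact rfl
  · ext y; simp only [Pi.sub_apply, Pi.mul_apply, id]; unfold Hh; push_cast; ring
  · simp only [id]; unfold Gg; push_cast; ring

lemma hasDerivAt_Kk (m : ℕ) (x : ℝ) : HasDerivAt (Kk (m+1)) (Ll m x) x := by
  have h := ((hasDerivAt_id x).mul (hasDerivAt_Hh m x)).sub
    ((hasDerivAt_Gg (m+1) x).const_mul (2*((m:ℝ)+1)+3))
  convert h using 1
  · exact rfl
  · exact rfl
  · ext y; simp only [Pi.sub_apply, Pi.mul_apply, id]; unfold Kk; push_cast; ring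
  · simp only [id]; unfold Ll; push_cast; ring

lemma hasDerivAt_Ll (m : ℕ) (x : ℝ) : HasDerivAt (Ll m) (Kk m x) x := by
  have h := ((hasDerivAt_id x).mul (hasDerivAt_Gg m x)).sub
    ((hasDerivAt_Hh m x).const_mul (2*(m:ℝ)+4))
  convert h using 1
  · exact rfl
  · exact rfl
  · exact rfl
  simp only [id]
  unfold Kk
  push_cast
  ring

lemma pc_zero (m : ℕ) : pc (m+1) 0 = 1 := by
  rw [pc, Finset.sum_range_succ']
  simp

lemma ps_zero (m : ℕ) : ps m 0 = 0 := by
  simp [ps]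

lemma Cc_zero (m : ℕ) : Cc (m+1) 0 = 0 := by simp [Cc, pc_zero]
lemma Ss_zero (m : ℕ) : Ss m 0 = 0 := by simp [Ss, ps_zero]
lemma Gg_zero (m : ℕ) : Gg m 0 = 0 := by simp [Gg, Cc_zero, Ss_zero]
lemma Hh_zero (m : ℕ) : Hh m 0 = 0 := by simp [Hh, Ss_zero]
lemma Kk_zero (m : ℕ) : Kk m 0 = 0 := by simp [Kk, Gg_zero, Hh_zero]
lemma Ll_zero (m : ℕ) : Ll m 0 = 0 := by simp [Ll, Gg_zero, Hh_zero]

lemma pos_of_deriv_pos {f g : ℝ → ℝ} (hd : ∀ x, HasDerivAt f (g x) x) (h0 : f 0 = 0)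
    (hg : ∀ x, 0 < x → 0 < g x) : ∀ x, 0 < x → 0 < f x := by
  have hmono : StrictMonoOn f (Set.Ici 0) := by
    apply strictMonoOn_of_deriv_pos (convex_Ici 0)
      (fun x _ => (hd x).continuousAt.continuousWithinAt)
    intro x hx
    rw [interior_Ici] at hx
    rw [(hd x).deriv]
    exact hg x hx
  intro x hx
  have := hmono Set.self_mem_Ici (Set.mem_Ici.mpr hx.le) hx
  rwa [h0] at this

lemma pos_of_deriv_pos_Icc {b : ℝ} {f g : ℝ → ℝ} (hd : ∀ x, HasDerivAt f (g x) x)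
    (h0 : f 0 = 0) (hg : ∀ x, 0 < x → x < b → 0 < g x) :
    ∀ x, 0 < x → x ≤ b → 0 < f x := by
  have hmono : StrictMonoOn f (Set.Icc 0 b) := by
    apply strictMonoOn_of_deriv_pos (convex_Icc 0 b)
      (fun x _ => (hd x).continuousAt.continuousWithinAt)
    intro x hx
    rw [interior_Icc] at hx
    rw [(hd x).deriv]
    exact hg x hx.1 hx.2
  intro x hx hxb
  have := hmono (Set.left_mem_Icc.mpr (le_trans hx.le hxb)) (Set.mem_Icc.mpr ⟨hx.le, hxb⟩) hx
  rwa [h0] at this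

lemma Ss1_eq (x : ℝ) : Ss 1 x = x - Real.sin x := by
  simp [Ss, ps, Finset.sum_range_one]

lemma Cc1_eq (x : ℝ) : Cc 1 x = 1 - Real.cos x := by
  simp [Cc, pc, Finset.sum_range_one]

lemma Cc2_eq (x : ℝ) : Cc 2 x = Real.cos x - 1 + x^2/2 := by
  simp [Cc, pc, Finset.sum_range_succ, Nat.factorial]
  ring

lemma Gg0_eq (x : ℝ) : Gg 0 x = 2 - 2 * Real.cos x - x * Real.sin x := by
  simp [Gg, Cc1_eq, Ss, ps]
  ring

lemma Hh1_eq (x : ℝ) : Hh 1 x = 2*x - 3*Real.sin x + x*Real.cos x := by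
  simp [Hh, Ss1_eq, Cc1_eq]
  ring

lemma Gg1_eq (x : ℝ) : Gg 1 x = x^2 - 4 + 4*Real.cos x + x*Real.sin x := by
  simp [Gg, Cc2_eq, Ss1_eq]
  ring

lemma Kk1_eq (x : ℝ) :
    Kk 1 x = 20 - 3*x^2 + x^2*Real.cos x - 20*Real.cos x - 8*x*Real.sin x := by
  simp [Kk, Hh1_eq, Gg1_eq]
  ring

-- sin u - u * cos u > 0 on (0, π]
lemma aux_sin (u : ℝ) (hu : 0 < u) (hu2 : u ≤ Real.pi) :
    0 < Real.sin u - u * Real.cos u := by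
  have := pos_of_deriv_pos_Icc (b := Real.pi)
    (f := fun u => Real.sin u - u * Real.cos u) (g := fun u => u * Real.sin u)
    (fun y => by
      have h := (Real.hasDerivAt_sin y).sub
        ((hasDerivAt_id y).mul (Real.hasDerivAt_cos y))
      convert h using 1
      · exact rfl
      · exact rfl
      · exact rfl
      simp only [id]
      ring)
    (by simp)
    (fun y hy hyp => mul_pos hy (Real.sin_pos_of_pos_of_lt_pi hy hyp))
  exact this u hu hu2

lemma Gg0_pos (x : ℝ) (hx : 0 < x) (hx4 : x < 4) : 0 < Gg 0 x := by
  have hpi : (2:ℝ) < Real.pi := by linarith [Real.pi_gt_three]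
  have hu : 0 < x/2 := by linarith
  have hu2 : x/2 ≤ Real.pi := by linarith
  have h1 : 0 < Real.sin (x/2) := Real.sin_pos_of_pos_of_lt_pi hu (by linarith)
  have h2 := aux_sin (x/2) hu hu2
  have hc : Real.cos x = 2 * Real.cos (x/2)^2 - 1 := by
    rw [show x = 2*(x/2) by ring, Real.cos_two_mul]; ring_nf
  have hs : Real.sin x = 2 * Real.sin (x/2) * Real.cos (x/2) := by
    rw [show x = 2*(x/2) by ring, Real.sin_two_mul]; ring_nf
  have hpyth := Real.sin_sq_add_cos_sq (x/2)
  rw [Gg0_eq, hc, hs]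
  nlinarith [mul_pos h1 h2]

lemma Hh1_pos (x : ℝ) (hx : 0 < x) : 0 < Hh 1 x := by
  rcases le_or_gt x 4 with h4 | h4
  · exact pos_of_deriv_pos_Icc (b := 4) (hasDerivAt_Hh 0)
      (Hh_zero 1) (fun y hy hy4 => by
        have := Gg0_pos y hy hy4
        convert this using 2 <;> norm_num) x hx h4
  · rw [Hh1_eq]
    nlinarith [Real.neg_one_le_cos x, Real.sin_le_one x]

lemma Gg_pos : ∀ m, ∀ x : ℝ, 0 < x → 0 < Gg (m+1) x := by
  intro m
  induction m with
  | zero =>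
    exact pos_of_deriv_pos (hasDerivAt_Gg 1) (Gg_zero 1) Hh1_pos
  | succ m ih =>
    have hH : ∀ x : ℝ, 0 < x → 0 < Hh (m+2) x :=
      pos_of_deriv_pos (hasDerivAt_Hh (m+1)) (Hh_zero (m+2)) ih
    exact pos_of_deriv_pos (hasDerivAt_Gg (m+2)) (Gg_zero (m+2)) hH

lemma Ss1_pos (x : ℝ) (hx : 0 < x) : 0 < Ss 1 x := by
  rw [Ss1_eq]; linarith [Real.sin_lt hx]

lemma CS_pos : ∀ m, (∀ x : ℝ, 0 < x → 0 < Ss (m+1) x) ∧ (∀ x : ℝ, 0 < x → 0 < Cc (m+2) x) := by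
  intro m
  induction m with
  | zero =>
    refine ⟨Ss1_pos, ?_⟩
    exact pos_of_deriv_pos (hasDerivAt_Cc 1) (Cc_zero 1) Ss1_pos
  | succ m ih =>
    have hS : ∀ x : ℝ, 0 < x → 0 < Ss (m+2) x :=
      pos_of_deriv_pos (hasDerivAt_Ss (m+2)) (Ss_zero (m+2)) ih.2
    exact ⟨hS, pos_of_deriv_pos (hasDerivAt_Cc (m+2)) (Cc_zero (m+2)) hS⟩

lemma cos_ub (x : ℝ) (hx : 0 < x) :
    Real.cos x < 1 - x^2/2 + x^4/24 - x^6/720 + x^8/40320 := by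
  have h := (CS_pos 3).2 x hx
  have : pc 5 x = 1 - x^2/2 + x^4/24 - x^6/720 + x^8/40320 := by
    simp [pc, Finset.sum_range_succ, Nat.factorial]
    norm_num
    ring
  rw [show (3+2 : ℕ) = 5 from rfl] at h
  unfold Cc at h
  rw [this] at h
  have hp : ((-1:ℝ))^5 = -1 := by norm_num
  nlinarith [h]

lemma sin_ub (x : ℝ) (hx : 0 < x) :
    Real.sin x < x - x^3/6 + x^5/120 - x^7/5040 + x^9/362880 := by
  have h := (CS_pos 4).1 x hx
  have : ps 5 x = x - x^3/6 + x^5/120 - x^7/5040 + x^9/362880 := by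
    simp [ps, Finset.sum_range_succ, Nat.factorial]
    norm_num
    ring
  rw [show (4+1 : ℕ) = 5 from rfl] at h
  unfold Ss at h
  rw [this] at h
  nlinarith [h]

lemma Kk1_pos (x : ℝ) (hx : 0 < x) (hxp : x < Real.pi) : 0 < Kk 1 x := by
  have hx2 : x^2 < 9.8697 := by
    nlinarith [Real.pi_lt_d6]
  have hq : 0 < x^4 - 108*x^2 + 1008 := by nlinarith [sq_nonneg (x^2 - 54)]
  have hc := cos_ub x hx
  have hs := sin_ub x hx
  have h20 : 0 < 20 - x^2 := by nlinarith
  have hp1 : 0 < (20 - x^2) * ((1 - x^2/2 + x^4/24 - x^6/720 + x^8/40320) - Real.cos x) :=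
    mul_pos h20 (by linarith)
  have hp2 : 0 < (8*x) * ((x - x^3/6 + x^5/120 - x^7/5040 + x^9/362880) - Real.sin x) :=
    mul_pos (by linarith) (by linarith)
  have hp3 : 0 < x^6 * (x^4 - 108*x^2 + 1008) := mul_pos (by positivity) hq
  rw [Kk1_eq]
  nlinarith [hp1, hp2, hp3]

lemma Kk_pos : ∀ m, ∀ x : ℝ, 0 < x → x < Real.pi → 0 < Kk (m+1) x := by
  intro m
  induction m with
  | zero => exact fun x hx hxp => Kk1_pos x hx hxp
  | succ m ih =>
    have hL : ∀ x : ℝ, 0 < x → x ≤ Real.pi → 0 < Ll (m+1) x :=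
      pos_of_deriv_pos_Icc (hasDerivAt_Ll (m+1)) (Ll_zero (m+1)) ih
    exact fun x hx hxp => pos_of_deriv_pos_Icc (hasDerivAt_Kk (m+1)) (Kk_zero (m+2))
      (fun y hy hyp => hL y hy hyp.le) x hx hxp.le

lemma Tcos_eq (n : ℕ) (x : ℝ) (hx : x ≠ 0) :
    Tcos n x = (Nat.factorial (2*n) : ℝ) * Cc n x / x ^ (2*n) := by
  rw [Tcos, if_neg hx, Cc, pc]
  ring

lemma hasDerivAt_F (m : ℕ) (x : ℝ) (hx : x ≠ 0) :
    HasDerivAt (fun y => (Nat.factorial (2*(m+2)) : ℝ) * Cc (m+2) y / y ^ (2*(m+2)))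
      (-((Nat.factorial (2*(m+2)) : ℝ) * Gg (m+1) x) / x ^ (2*m+5)) x := by
  have h := (((hasDerivAt_Cc (m+1) x).const_mul ((Nat.factorial (2*(m+2)) : ℝ))).div
    (hasDerivAt_pow (2*(m+2)) x) (pow_ne_zero _ hx))
  convert h using 1
  · exact rfl
  · exact rfl
  · exact rfl
  rw [show 2*(m+2)-1 = 2*m+3 by omega]
  unfold Gg
  have hxn : x ^ (2*m+5) ≠ 0 := pow_ne_zero _ hx
  field_simp
  push_cast
  ring

lemma hasDerivAt_F1 (m : ℕ) (x : ℝ) (hx : x ≠ 0) :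
    HasDerivAt (fun y => -((Nat.factorial (2*(m+2)) : ℝ) * Gg (m+1) y) / y ^ (2*m+5))
      (-((Nat.factorial (2*(m+2)) : ℝ) * Kk (m+1) x) / x ^ (2*m+6)) x := by
  have h := ((((hasDerivAt_Gg (m+1) x).const_mul ((Nat.factorial (2*(m+2)) : ℝ))).neg).div
    (hasDerivAt_pow (2*m+5) x) (pow_ne_zero _ hx))
  convert h using 1
  · exact rfl
  · exact rfl
  · exact rfl
  rw [show 2*m+5-1 = 2*m+4 by omega]
  simp only [Pi.neg_apply]
  unfold Kk
  have hxn : x ^ (2*m+6) ≠ 0 := pow_ne_zero _ hx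
  field_simp
  push_cast
  ring

theorem Tcos_pos_strictAnti_concave (n : ℕ) (hn : 2 ≤ n) :
    (∀ x ∈ Set.Ioi (0:ℝ), 0 < Tcos n x) ∧
    StrictAntiOn (Tcos n) (Set.Ioi (0:ℝ)) ∧
    ConcaveOn ℝ (Set.Ioo 0 Real.pi) (Tcos n) := by
  obtain ⟨m, rfl⟩ : ∃ m, n = m + 2 := ⟨n - 2, by omega⟩
  set c : ℝ := (Nat.factorial (2*(m+2)) : ℝ) with hc
  have hcpos : 0 < c := by positivity
  set F : ℝ → ℝ := fun y => c * Cc (m+2) y / y ^ (2*(m+2)) with hF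
  set F1 : ℝ → ℝ := fun y => -(c * Gg (m+1) y) / y ^ (2*m+5) with hF1
  have hTF : ∀ x : ℝ, x ≠ 0 → Tcos (m+2) x = F x := fun x hx => Tcos_eq (m+2) x hx
  have hdF : ∀ x : ℝ, x ≠ 0 → HasDerivAt F (F1 x) x := fun x hx => hasDerivAt_F m x hx
  have hdF1 : ∀ x : ℝ, x ≠ 0 → HasDerivAt F1 (-(c * Kk (m+1) x) / x ^ (2*m+6)) x :=
    fun x hx => hasDerivAt_F1 m x hx
  have hF1neg : ∀ x : ℝ, 0 < x → F1 x < 0 := by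
    intro x hx
    have := Gg_pos m x hx
    have : 0 < c * Gg (m+1) x := mul_pos hcpos this
    exact div_neg_of_neg_of_pos (neg_neg_iff_pos.mpr this) (pow_pos hx _)
  refine ⟨?_, ?_, ?_⟩
  · intro x hx
    rw [Set.mem_Ioi] at hx
    rw [hTF x hx.ne']
    exact div_pos (mul_pos hcpos ((CS_pos m).2 x hx)) (pow_pos hx _)
  · have hanti : StrictAntiOn F (Set.Ioi (0:ℝ)) := by
      apply strictAntiOn_of_deriv_neg (convex_Ioi 0)
        (fun x hx => (hdF x (ne_of_gt hx)).continuousAt.continuousWithinAt)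
      intro x hx
      rw [interior_Ioi] at hx
      rw [(hdF x hx.ne').deriv]
      exact hF1neg x hx
    intro a ha b hb hab
    rw [Set.mem_Ioi] at ha hb
    rw [hTF a ha.ne', hTF b hb.ne']
    exact hanti ha hb hab
  · have hconc : ConcaveOn ℝ (Set.Ioo 0 Real.pi) F := by
      apply concaveOn_of_deriv2_nonpos (convex_Ioo 0 Real.pi)
      · exact fun x hx => (hdF x hx.1.ne').continuousAt.continuousWithinAt
      · intro x hx
        rw [interior_Ioo] at hx
        exact (hdF x hx.1.ne').differentiableAt.differentiableWithinAt
      · intro x hx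
        rw [interior_Ioo] at hx
        have heq : deriv F =ᶠ[nhds x] F1 := by
          filter_upwards [isOpen_Ioi.mem_nhds (Set.mem_Ioi.mpr hx.1)] with y hy
          exact (hdF y (Set.mem_Ioi.mp hy).ne').deriv
        apply DifferentiableAt.differentiableWithinAt
        rw [Filter.EventuallyEq.differentiableAt_iff heq]
        exact (hdF1 x hx.1.ne').differentiableAt
      · intro x hx
        rw [interior_Ioo] at hx
        have heq : deriv F =ᶠ[nhds x] F1 := by
          filter_upwards [isOpen_Ioi.mem_nhds (Set.mem_Ioi.mpr hx.1)] with y hy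
          exact (hdF y (Set.mem_Ioi.mp hy).ne').deriv
        have h2 : deriv^[2] F x = -(c * Kk (m+1) x) / x ^ (2*m+6) := by
          simp only [Function.iterate_succ, Function.iterate_zero, Function.comp_apply, id_eq]
          rw [Filter.EventuallyEq.deriv_eq heq]
          exact (hdF1 x hx.1.ne').deriv
        rw [h2]
        have hK := Kk_pos m x hx.1 hx.2
        have : 0 < c * Kk (m+1) x := mul_pos hcpos hK
        exact le_of_lt (div_neg_of_neg_of_pos (neg_neg_iff_pos.mpr this) (pow_pos hx.1 _))
    refine ⟨convex_Ioo 0 Real.pi, ?_⟩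
    intro x hx y hy a b ha hb hab
    have hmem : a • x + b • y ∈ Set.Ioo (0:ℝ) Real.pi :=
      (convex_Ioo 0 Real.pi) hx hy ha hb hab
    simp only [smul_eq_mul] at hmem ⊢
    rw [hTF x hx.1.ne', hTF y hy.1.ne', hTF _ hmem.1.ne']
    have := hconc.2 hx hy ha hb hab
    simpa using this
end

section
/- For every positive integer n, the ratio T_sin n x / T_sin (n+1) x tends to n(2n+1)/((n+1)(2n+3)) as x → ∞, and tends to 1 as x → 0. -/
open Filter Real Finset

private lemma tsin_eq (n : ℕ) {x : ℝ} (hx : x ≠ 0) :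
    Tsin n x = (-1 : ℝ) ^ n * (Nat.factorial (2 * n + 1)) / x ^ (2 * n + 1) *
      (Real.sin x - ∑ k ∈ Finset.range n,
        (-1 : ℝ) ^ k * x ^ (2 * k + 1) / (Nat.factorial (2 * k + 1))) :=
  if_neg hx

set_option maxHeartbeats 1000000 in
/-- The remainder divided by a higher power tends to `0` at infinity. -/
private lemma tendsto_rem_div (m : ℕ) :
    Tendsto (fun x : ℝ =>
      (Real.sin x - ∑ k ∈ Finset.range m,
        (-1 : ℝ) ^ k * x ^ (2 * k + 1) / (Nat.factorial (2 * k + 1))) / x ^ (2 * m + 1))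
      atTop (nhds 0) := by
  have hsin : Tendsto (fun x : ℝ => Real.sin x / x ^ (2 * m + 1)) atTop (nhds 0) := by
    have hb : Tendsto (fun x : ℝ => (x ^ (2 * m + 1))⁻¹) atTop (nhds 0) :=
      (tendsto_pow_atTop (by omega : 2 * m + 1 ≠ 0)).inv_tendsto_atTop
    refine squeeze_zero_norm' ?_ hb
    filter_upwards [eventually_ge_atTop (1 : ℝ)] with x hx
    have hxp : (0:ℝ) < x ^ (2 * m + 1) := pow_pos (by linarith) _
    rw [norm_div, Real.norm_eq_abs, Real.norm_eq_abs, abs_of_pos hxp, div_eq_mul_inv]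
    calc |Real.sin x| * (x ^ (2 * m + 1))⁻¹ ≤ 1 * (x ^ (2 * m + 1))⁻¹ := by
          gcongr; exact Real.abs_sin_le_one x
      _ = (x ^ (2 * m + 1))⁻¹ := one_mul _
  have hsum : Tendsto (fun x : ℝ => ∑ k ∈ Finset.range m,
      ((-1 : ℝ) ^ k * x ^ (2 * k + 1) / (Nat.factorial (2 * k + 1))) / x ^ (2 * m + 1))
      atTop (nhds 0) := by
    have : Tendsto (fun x : ℝ => ∑ k ∈ Finset.range m,
        ((-1 : ℝ) ^ k / (Nat.factorial (2 * k + 1))) * (x ^ (2 * k + 1) / x ^ (2 * m + 1)))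
        atTop (nhds (∑ k ∈ Finset.range m, ((-1 : ℝ) ^ k / (Nat.factorial (2 * k + 1))) * 0)) := by
      refine tendsto_finset_sum _ fun k hk => ?_
      have hkm : k < m := Finset.mem_range.mp hk
      refine Tendsto.const_mul _ ?_
      have he : 2 * m + 1 = (2 * k + 1) + 2 * (m - k) := by omega
      have hb : Tendsto (fun x : ℝ => (x ^ (2 * (m - k)))⁻¹) atTop (nhds 0) :=
        (tendsto_pow_atTop (by omega : 2 * (m - k) ≠ 0)).inv_tendsto_atTop
      refine hb.congr' ?_
      filter_upwards [eventually_ge_atTop (1 : ℝ)] with x hx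
      have hx0 : x ≠ 0 := by linarith
      rw [inv_eq_one_div, div_eq_div_iff (pow_ne_zero _ hx0) (pow_ne_zero _ hx0), one_mul,
        ← pow_add, he]
    simp only [mul_zero, Finset.sum_const_zero] at this
    refine this.congr fun x => ?_
    refine Finset.sum_congr rfl fun k _ => ?_
    ring
  have := hsin.sub hsum
  rw [sub_zero] at this
  refine this.congr fun x => ?_
  rw [sub_div, Finset.sum_div]

/-- Cast of factorial ratio. -/
private lemma fact_cast (m : ℕ) :
    ((Nat.factorial (2 * (m + 1) + 1) : ℝ)) =
      (2 * (m:ℝ) + 3) * (2 * m + 2) * (Nat.factorial (2 * m + 1)) := by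
  have h : 2 * (m + 1) + 1 = (2 * m + 1) + 1 + 1 := by omega
  rw [h, Nat.factorial_succ, Nat.factorial_succ]
  push_cast
  ring

/-- Key at-top limit: `x ^ 2 * Tsin (m+1) x → (2(m+1)+1) * (2(m+1))`. -/
private lemma tendsto_sq_mul_tsin (m : ℕ) :
    Tendsto (fun x : ℝ => x ^ 2 * Tsin (m + 1) x) atTop
      (nhds ((2 * (m:ℝ) + 3) * (2 * m + 2))) := by
  have h0 := tendsto_rem_div m
  have hC := (h0.const_mul ((-1 : ℝ) ^ (m + 1) * (Nat.factorial (2 * (m + 1) + 1)))).add_const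
      ((2 * (m:ℝ) + 3) * (2 * m + 2))
  rw [mul_zero, zero_add] at hC
  refine hC.congr' ?_
  filter_upwards [eventually_ge_atTop (1 : ℝ)] with x hx
  have hx0 : x ≠ 0 := by linarith
  rw [tsin_eq _ hx0, Finset.sum_range_succ, fact_cast]
  have hxp : x ^ (2 * (m + 1) + 1) ≠ 0 := pow_ne_zero _ hx0
  have hxp' : x ^ (2 * m + 1) ≠ 0 := pow_ne_zero _ hx0
  have hfac : ((Nat.factorial (2 * m + 1) : ℝ)) ≠ 0 := by
    exact_mod_cast Nat.factorial_ne_zero _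
  have hpow : x ^ (2 * (m + 1) + 1) = x ^ (2 * m + 1) * x ^ 2 := by
    rw [← pow_add]; ring_nf
  rw [pow_succ]
  rcases neg_one_pow_eq_or ℝ m with h | h <;> rw [h] <;> field_simp [hpow] <;> ring

private lemma fact_one_div_summable : Summable (fun j : ℕ => (1 : ℝ) / j.factorial) := by
  simpa using Real.summable_pow_div_factorial 1

/-- Key at-zero limit: `Tsin n x → 1` as `x → 0`, `x ≠ 0`. -/
private lemma tendsto_tsin_zero (n : ℕ) :
    Tendsto (fun x => Tsin n x) (nhdsWithin 0 {(0:ℝ)}ᶜ) (nhds 1) := by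
  set E : ℝ := ∑' j : ℕ, (1 : ℝ) / j.factorial with hE
  have key : ∀ x : ℝ, x ≠ 0 → |x| ≤ 1 →
      |Tsin n x - 1| ≤ ((Nat.factorial (2 * n + 1)) * E) * x ^ 2 := by
    intro x hx0 hx1
    -- the tail of the sine series
    have hf := Real.hasSum_sin x
    have hR : HasSum (fun j : ℕ => (-1 : ℝ) ^ (j + (n+1)) * x ^ (2 * (j + (n+1)) + 1) /
        (Nat.factorial (2 * (j + (n+1)) + 1)))
        (Real.sin x - ∑ k ∈ Finset.range (n+1),
          (-1 : ℝ) ^ k * x ^ (2 * k + 1) / (Nat.factorial (2 * k + 1))) := by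
      have h := (hasSum_nat_add_iff
          (f := fun k : ℕ => (-1:ℝ)^k * x^(2*k+1) / (Nat.factorial (2*k+1))) (n+1)
          (g := Real.sin x - ∑ k ∈ Finset.range (n+1),
            (-1 : ℝ) ^ k * x ^ (2 * k + 1) / (Nat.factorial (2 * k + 1)))).2
        (by simpa using hf)
      exact h
    -- bound each term of the tail
    have hterm : ∀ j : ℕ, ‖(-1 : ℝ) ^ (j + (n+1)) * x ^ (2 * (j + (n+1)) + 1) /
        (Nat.factorial (2 * (j + (n+1)) + 1))‖ ≤ |x| ^ (2 * n + 3) * (1 / j.factorial) := by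
      intro j
      have h1 : ‖(-1 : ℝ) ^ (j + (n+1)) * x ^ (2 * (j + (n+1)) + 1) /
          (Nat.factorial (2 * (j + (n+1)) + 1))‖ =
          |x| ^ (2 * (j + (n+1)) + 1) / (Nat.factorial (2 * (j + (n+1)) + 1)) := by
        rw [norm_div, norm_mul, norm_pow, norm_pow, Real.norm_eq_abs, Real.norm_eq_abs,
          Real.norm_eq_abs, abs_neg, abs_one, one_pow, one_mul,
          Nat.abs_cast]
      rw [h1]
      have h2 : |x| ^ (2 * (j + (n+1)) + 1) ≤ |x| ^ (2 * n + 3) :=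
        pow_le_pow_of_le_one (abs_nonneg x) hx1 (by omega)
      have h3 : (j.factorial : ℝ) ≤ (Nat.factorial (2 * (j + (n+1)) + 1) : ℝ) := by
        exact_mod_cast Nat.factorial_le (by omega)
      have h4 : (0:ℝ) < j.factorial := by exact_mod_cast j.factorial_pos
      calc |x| ^ (2 * (j + (n+1)) + 1) / (Nat.factorial (2 * (j + (n+1)) + 1))
          ≤ |x| ^ (2 * n + 3) / (j.factorial : ℝ) := by
            apply div_le_div₀ (pow_nonneg (abs_nonneg x) _) h2 h4 h3
        _ = |x| ^ (2 * n + 3) * (1 / j.factorial) := by ring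
    have hgsum : Summable (fun j : ℕ => |x| ^ (2 * n + 3) * (1 / j.factorial)) :=
      fact_one_div_summable.mul_left _
    have hnorm_sum : Summable (fun j : ℕ => ‖(-1 : ℝ) ^ (j + (n+1)) * x ^ (2 * (j + (n+1)) + 1) /
        (Nat.factorial (2 * (j + (n+1)) + 1))‖) :=
      Summable.of_nonneg_of_le (fun j => norm_nonneg _) hterm hgsum
    have hRbound : |Real.sin x - ∑ k ∈ Finset.range (n+1),
        (-1 : ℝ) ^ k * x ^ (2 * k + 1) / (Nat.factorial (2 * k + 1))| ≤
        |x| ^ (2 * n + 3) * E := by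
      rw [← hR.tsum_eq]
      calc |∑' j : ℕ, (-1 : ℝ) ^ (j + (n+1)) * x ^ (2 * (j + (n+1)) + 1) /
          (Nat.factorial (2 * (j + (n+1)) + 1))|
          ≤ ∑' j : ℕ, ‖(-1 : ℝ) ^ (j + (n+1)) * x ^ (2 * (j + (n+1)) + 1) /
            (Nat.factorial (2 * (j + (n+1)) + 1))‖ := norm_tsum_le_tsum_norm hnorm_sum
        _ ≤ ∑' j : ℕ, |x| ^ (2 * n + 3) * (1 / j.factorial) :=
            Summable.tsum_le_tsum hterm hnorm_sum hgsum
        _ = |x| ^ (2 * n + 3) * E := by rw [tsum_mul_left]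
    -- express `Tsin n x - 1` in terms of the tail
    have hfac0 : ((Nat.factorial (2 * n + 1) : ℝ)) ≠ 0 := by
      exact_mod_cast Nat.factorial_ne_zero _
    have hxp : x ^ (2 * n + 1) ≠ 0 := pow_ne_zero _ hx0
    have heq : Tsin n x - 1 = ((-1 : ℝ) ^ n * (Nat.factorial (2 * n + 1)) / x ^ (2 * n + 1)) *
        (Real.sin x - ∑ k ∈ Finset.range (n+1),
          (-1 : ℝ) ^ k * x ^ (2 * k + 1) / (Nat.factorial (2 * k + 1))) := by
      rw [tsin_eq _ hx0, Finset.sum_range_succ]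
      rcases neg_one_pow_eq_or ℝ n with h | h <;> rw [h] <;> field_simp <;> ring
    rw [heq, abs_mul, abs_div, abs_mul, abs_pow, abs_neg, abs_one, one_pow, one_mul,
      Nat.abs_cast, abs_pow]
    calc (Nat.factorial (2 * n + 1) : ℝ) / |x| ^ (2 * n + 1) *
        |Real.sin x - ∑ k ∈ Finset.range (n+1),
          (-1 : ℝ) ^ k * x ^ (2 * k + 1) / (Nat.factorial (2 * k + 1))|
        ≤ (Nat.factorial (2 * n + 1) : ℝ) / |x| ^ (2 * n + 1) * (|x| ^ (2 * n + 3) * E) := by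
          apply mul_le_mul_of_nonneg_left hRbound
          positivity
      _ = ((Nat.factorial (2 * n + 1)) * E) * x ^ 2 := by
          have hax : |x| ≠ 0 := abs_ne_zero.mpr hx0
          have h5 : |x| ^ (2 * n + 3) = |x| ^ (2 * n + 1) * |x| ^ 2 := by
            rw [← pow_add]
          have h6 : |x| ^ 2 = x ^ 2 := sq_abs x
          rw [h5, h6]
          field_simp
  -- squeeze
  have hsq : Tendsto (fun x : ℝ => Tsin n x - 1) (nhdsWithin 0 {(0:ℝ)}ᶜ) (nhds 0) := by
    have hb : Tendsto (fun x : ℝ => ((Nat.factorial (2 * n + 1)) * E) * x ^ 2)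
        (nhdsWithin 0 {(0:ℝ)}ᶜ) (nhds 0) := by
      have : Tendsto (fun x : ℝ => ((Nat.factorial (2 * n + 1) : ℝ) * E) * x ^ 2)
          (nhds 0) (nhds (((Nat.factorial (2 * n + 1) : ℝ) * E) * (0:ℝ) ^ 2)) := by
        exact (continuous_const.mul (continuous_pow 2)).tendsto 0
      simpa using this.mono_left nhdsWithin_le_nhds
    refine squeeze_zero_norm' ?_ hb
    have h1 : ∀ᶠ x : ℝ in nhdsWithin 0 {(0:ℝ)}ᶜ, x ≠ 0 :=
      eventually_mem_nhdsWithin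
    have h2 : ∀ᶠ x : ℝ in nhdsWithin 0 {(0:ℝ)}ᶜ, |x| ≤ 1 := by
      have h := eventually_abs_sub_lt (0:ℝ) one_pos
      simp only [sub_zero] at h
      exact (h.mono fun x hx => le_of_lt hx).filter_mono nhdsWithin_le_nhds
    filter_upwards [h1, h2] with x hx0 hx1
    simpa using key x hx0 hx1
  have := hsq.add_const 1
  rw [zero_add] at this
  refine this.congr fun x => by ring

theorem Tsin_ratio_limits (n : ℕ) (hn : 0 < n) :
    Filter.Tendsto (fun x => Tsin n x / Tsin (n + 1) x) Filter.atTop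
      (nhds (((n : ℝ) * (2 * n + 1)) / ((n + 1) * (2 * n + 3)))) ∧
    Filter.Tendsto (fun x => Tsin n x / Tsin (n + 1) x) (nhdsWithin 0 {(0:ℝ)}ᶜ) (nhds 1) := by
  constructor
  · obtain ⟨m, rfl⟩ : ∃ m, n = m + 1 := ⟨n - 1, by omega⟩
    have hA := tendsto_sq_mul_tsin m
    have hB := tendsto_sq_mul_tsin (m + 1)
    have hden : ((2 * ((m+1:ℕ):ℝ) + 3) * (2 * ((m+1:ℕ):ℝ) + 2)) ≠ 0 := by positivity
    have hdiv := hA.div hB hden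
    have hval : ((2 * (m:ℝ) + 3) * (2 * (m:ℝ) + 2)) /
        ((2 * ((m+1:ℕ):ℝ) + 3) * (2 * ((m+1:ℕ):ℝ) + 2)) =
        (((m+1:ℕ):ℝ) * (2 * ((m+1:ℕ):ℝ) + 1)) /
        ((((m+1:ℕ):ℝ) + 1) * (2 * ((m+1:ℕ):ℝ) + 3)) := by
      push_cast
      rw [div_eq_div_iff (by positivity) (by positivity)]
      ring
    rw [hval] at hdiv
    refine hdiv.congr' ?_
    filter_upwards [eventually_ge_atTop (1 : ℝ)] with x hx
    have hx0 : x ≠ 0 := by linarith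
    have hx2 : x ^ 2 ≠ 0 := pow_ne_zero _ hx0
    simp only [Pi.div_apply]
    rw [mul_div_mul_left _ _ hx2]
  · have h1 := tendsto_tsin_zero n
    have h2 := tendsto_tsin_zero (n + 1)
    have h3 := h1.div h2 one_ne_zero
    rw [div_one] at h3
    exact h3
end

section
/- For every integer n ≥ 2, the ratio T_cos (2n) x / T_sin n x tends to (2n-1)/(2n+1) as x → ∞, and tends to 1 as x → 0. -/
open Filter Finset Real

noncomputable def expC : ℝ := ∑' k : ℕ, (1:ℝ) / (Nat.factorial k)

lemma hasSum_expC : HasSum (fun k : ℕ => (1:ℝ)/(Nat.factorial k)) expC := by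
  have h : Summable (fun k : ℕ => (1:ℝ)/(Nat.factorial k)) := by
    simpa [one_div] using Real.summable_pow_div_factorial 1
  exact h.hasSum

lemma expC_nonneg : 0 ≤ expC := tsum_nonneg (fun k => by positivity)

lemma cos_tail (m : ℕ) (x : ℝ) :
    HasSum (fun k : ℕ => (-1:ℝ)^(k+m) * x^(2*(k+m)) / (Nat.factorial (2*(k+m))))
      (Real.cos x - ∑ k ∈ Finset.range m, (-1:ℝ)^k * x^(2*k) / (Nat.factorial (2*k))) :=
  (hasSum_nat_add_iff' m).2 (Real.hasSum_cos x)

lemma sin_tail (m : ℕ) (x : ℝ) :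
    HasSum (fun k : ℕ => (-1:ℝ)^(k+m) * x^(2*(k+m)+1) / (Nat.factorial (2*(k+m)+1)))
      (Real.sin x - ∑ k ∈ Finset.range m, (-1:ℝ)^k * x^(2*k+1) / (Nat.factorial (2*k+1))) :=
  (hasSum_nat_add_iff' m).2 (Real.hasSum_sin x)

lemma cos_remainder_bound (m : ℕ) (x : ℝ) (hx : |x| ≤ 1) :
    |Real.cos x - ∑ k ∈ Finset.range m, (-1:ℝ)^k * x^(2*k) / (Nat.factorial (2*k))|
      ≤ expC * |x|^(2*m) := by
  rw [← (cos_tail m x).tsum_eq]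
  have hb : HasSum (fun k : ℕ => |x|^(2*m) * (1/(Nat.factorial k))) (|x|^(2*m) * expC) :=
    hasSum_expC.mul_left _
  have key : ∀ k : ℕ, ‖(-1:ℝ)^(k+m) * x^(2*(k+m)) / (Nat.factorial (2*(k+m)))‖
      ≤ |x|^(2*m) * (1/(Nat.factorial k)) := by
    intro k
    rw [Real.norm_eq_abs, abs_div, abs_mul, abs_pow, abs_pow, abs_neg, abs_one, one_pow, one_mul,
      Nat.abs_cast, mul_one_div]
    apply div_le_div₀ (by positivity)
    · exact pow_le_pow_of_le_one (abs_nonneg x) hx (by omega)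
    · exact_mod_cast Nat.factorial_pos k
    · exact_mod_cast Nat.factorial_le (by omega)
  have := tsum_of_norm_bounded hb key
  rw [Real.norm_eq_abs] at this
  linarith [this]

lemma sin_remainder_bound (m : ℕ) (x : ℝ) (hx : |x| ≤ 1) :
    |Real.sin x - ∑ k ∈ Finset.range m, (-1:ℝ)^k * x^(2*k+1) / (Nat.factorial (2*k+1))|
      ≤ expC * |x|^(2*m+1) := by
  rw [← (sin_tail m x).tsum_eq]
  have hb : HasSum (fun k : ℕ => |x|^(2*m+1) * (1/(Nat.factorial k))) (|x|^(2*m+1) * expC) :=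
    hasSum_expC.mul_left _
  have key : ∀ k : ℕ, ‖(-1:ℝ)^(k+m) * x^(2*(k+m)+1) / (Nat.factorial (2*(k+m)+1))‖
      ≤ |x|^(2*m+1) * (1/(Nat.factorial k)) := by
    intro k
    rw [Real.norm_eq_abs, abs_div, abs_mul, abs_pow, abs_pow, abs_neg, abs_one, one_pow, one_mul,
      Nat.abs_cast, mul_one_div]
    apply div_le_div₀ (by positivity)
    · exact pow_le_pow_of_le_one (abs_nonneg x) hx (by omega)
    · exact_mod_cast Nat.factorial_pos k
    · exact_mod_cast Nat.factorial_le (by omega)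
  have := tsum_of_norm_bounded hb key
  rw [Real.norm_eq_abs] at this
  linarith [this]

lemma Tcos_sub_one (n : ℕ) (x : ℝ) (hx : x ≠ 0) :
    Tcos n x - 1 = (-1:ℝ)^n * (Nat.factorial (2*n)) / x^(2*n) *
      (Real.cos x - ∑ k ∈ Finset.range (n+1), (-1:ℝ)^k * x^(2*k) / (Nat.factorial (2*k))) := by
  rw [Tcos, if_neg hx, Finset.sum_range_succ]
  have hs : ((-1:ℝ)^n) * ((-1:ℝ)^n) = 1 := by
    rw [← pow_add]
    exact Even.neg_one_pow ⟨n, (two_mul n).symm ▸ rfl⟩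
  have hF : (0:ℝ) < (Nat.factorial (2*n) : ℝ) := by exact_mod_cast Nat.factorial_pos _
  have hxp : x^(2*n) ≠ 0 := pow_ne_zero _ hx
  have hct : ((-1:ℝ)^n * (Nat.factorial (2*n)) / x^(2*n)) *
      ((-1:ℝ)^n * x^(2*n) / (Nat.factorial (2*n))) = 1 := by
    have : ((-1:ℝ)^n * (Nat.factorial (2*n)) / x^(2*n)) *
        ((-1:ℝ)^n * x^(2*n) / (Nat.factorial (2*n)))
        = (((-1:ℝ)^n) * ((-1:ℝ)^n)) *
          (((Nat.factorial (2*n) : ℝ) / (Nat.factorial (2*n))) * (x^(2*n)/x^(2*n))) := by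
      ring
    rw [this, hs, div_self hF.ne', div_self hxp]
    ring
  linear_combination hct

lemma Tsin_sub_one (n : ℕ) (x : ℝ) (hx : x ≠ 0) :
    Tsin n x - 1 = (-1:ℝ)^n * (Nat.factorial (2*n+1)) / x^(2*n+1) *
      (Real.sin x - ∑ k ∈ Finset.range (n+1), (-1:ℝ)^k * x^(2*k+1) / (Nat.factorial (2*k+1))) := by
  rw [Tsin, if_neg hx, Finset.sum_range_succ]
  have hs : ((-1:ℝ)^n) * ((-1:ℝ)^n) = 1 := by
    rw [← pow_add]
    exact Even.neg_one_pow ⟨n, (two_mul n).symm ▸ rfl⟩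
  have hF : (0:ℝ) < (Nat.factorial (2*n+1) : ℝ) := by exact_mod_cast Nat.factorial_pos _
  have hxp : x^(2*n+1) ≠ 0 := pow_ne_zero _ hx
  have hct : ((-1:ℝ)^n * (Nat.factorial (2*n+1)) / x^(2*n+1)) *
      ((-1:ℝ)^n * x^(2*n+1) / (Nat.factorial (2*n+1))) = 1 := by
    have : ((-1:ℝ)^n * (Nat.factorial (2*n+1)) / x^(2*n+1)) *
        ((-1:ℝ)^n * x^(2*n+1) / (Nat.factorial (2*n+1)))
        = (((-1:ℝ)^n) * ((-1:ℝ)^n)) *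
          (((Nat.factorial (2*n+1) : ℝ) / (Nat.factorial (2*n+1))) * (x^(2*n+1)/x^(2*n+1))) := by
      ring
    rw [this, hs, div_self hF.ne', div_self hxp]
    ring
  linear_combination hct

lemma tendsto_Tcos_zero (n : ℕ) :
    Filter.Tendsto (Tcos n) (nhdsWithin 0 {(0:ℝ)}ᶜ) (nhds 1) := by
  rw [← tendsto_sub_nhds_zero_iff]
  have hsmall : ∀ᶠ x : ℝ in nhdsWithin 0 {(0:ℝ)}ᶜ, |x| ≤ 1 := by
    apply Filter.Eventually.filter_mono nhdsWithin_le_nhds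
    filter_upwards [Metric.closedBall_mem_nhds (0:ℝ) one_pos] with x hx
    simpa [Real.dist_eq] using hx
  apply squeeze_zero_norm' (a := fun x : ℝ => (Nat.factorial (2*n)) * expC * x^2)
  · filter_upwards [hsmall, self_mem_nhdsWithin] with x hx1 hx0
    replace hx0 : x ≠ 0 := hx0
    have hb := cos_remainder_bound (n+1) x hx1
    rw [Real.norm_eq_abs, Tcos_sub_one n x hx0, abs_mul]
    have habs : |(-1:ℝ)^n * (Nat.factorial (2*n)) / x^(2*n)|
        = (Nat.factorial (2*n) : ℝ) / |x|^(2*n) := by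
      simp [abs_mul, abs_div, abs_pow, Nat.abs_cast]
    rw [habs]
    have h2 := mul_le_mul_of_nonneg_left hb
      (show (0:ℝ) ≤ (Nat.factorial (2*n) : ℝ) / |x|^(2*n) by positivity)
    refine h2.trans (le_of_eq ?_)
    have hxne : |x|^(2*n) ≠ 0 := pow_ne_zero _ (abs_ne_zero.2 hx0)
    have hsplit : |x|^(2*(n+1)) = |x|^(2*n) * x^2 := by
      rw [show 2*(n+1) = 2*n + 2 by ring, pow_add, sq_abs]
    rw [hsplit]
    field_simp
  · have hc : Continuous (fun x : ℝ => (Nat.factorial (2*n)) * expC * x^2) := by continuity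
    have h := (hc.tendsto 0).mono_left (nhdsWithin_le_nhds (s := {(0:ℝ)}ᶜ))
    simpa using h

lemma tendsto_Tsin_zero (n : ℕ) :
    Filter.Tendsto (Tsin n) (nhdsWithin 0 {(0:ℝ)}ᶜ) (nhds 1) := by
  rw [← tendsto_sub_nhds_zero_iff]
  have hsmall : ∀ᶠ x : ℝ in nhdsWithin 0 {(0:ℝ)}ᶜ, |x| ≤ 1 := by
    apply Filter.Eventually.filter_mono nhdsWithin_le_nhds
    filter_upwards [Metric.closedBall_mem_nhds (0:ℝ) one_pos] with x hx
    simpa [Real.dist_eq] using hx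
  apply squeeze_zero_norm' (a := fun x : ℝ => (Nat.factorial (2*n+1)) * expC * x^2)
  · filter_upwards [hsmall, self_mem_nhdsWithin] with x hx1 hx0
    replace hx0 : x ≠ 0 := hx0
    have hb := sin_remainder_bound (n+1) x hx1
    rw [Real.norm_eq_abs, Tsin_sub_one n x hx0, abs_mul]
    have habs : |(-1:ℝ)^n * (Nat.factorial (2*n+1)) / x^(2*n+1)|
        = (Nat.factorial (2*n+1) : ℝ) / |x|^(2*n+1) := by
      simp [abs_mul, abs_div, abs_pow, Nat.abs_cast]
    rw [habs]
    have h2 := mul_le_mul_of_nonneg_left hb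
      (show (0:ℝ) ≤ (Nat.factorial (2*n+1) : ℝ) / |x|^(2*n+1) by positivity)
    refine h2.trans (le_of_eq ?_)
    have hxne : |x|^(2*n+1) ≠ 0 := pow_ne_zero _ (abs_ne_zero.2 hx0)
    have hsplit : |x|^(2*(n+1)+1) = |x|^(2*n+1) * x^2 := by
      rw [show 2*(n+1)+1 = (2*n+1) + 2 by ring, pow_add, sq_abs]
    rw [hsplit]
    field_simp
  · have hc : Continuous (fun x : ℝ => (Nat.factorial (2*n+1)) * expC * x^2) := by continuity
    have h := (hc.tendsto 0).mono_left (nhdsWithin_le_nhds (s := {(0:ℝ)}ᶜ))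
    simpa using h

lemma cos_poly_bound (m : ℕ) (x : ℝ) (hx : 1 ≤ x) :
    |Real.cos x - ∑ k ∈ Finset.range (m+1), (-1:ℝ)^k * x^(2*k) / (Nat.factorial (2*k))|
      ≤ (1 + ∑ k ∈ Finset.range (m+1), (1:ℝ)/(Nat.factorial (2*k))) * x^(2*m) := by
  have h0 : (0:ℝ) < x := lt_of_lt_of_le one_pos hx
  have h1 : |Real.cos x| ≤ 1 := Real.abs_cos_le_one x
  have hxm : (1:ℝ) ≤ x^(2*m) := one_le_pow₀ hx
  have h2 : |∑ k ∈ Finset.range (m+1), (-1:ℝ)^k * x^(2*k) / (Nat.factorial (2*k))|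
      ≤ ∑ k ∈ Finset.range (m+1), (1/(Nat.factorial (2*k) : ℝ)) * x^(2*m) := by
    refine (Finset.abs_sum_le_sum_abs _ _).trans (Finset.sum_le_sum ?_)
    intro k hk
    have hk' : k ≤ m := by exact Nat.lt_succ_iff.mp (Finset.mem_range.mp hk)
    have habs : |(-1:ℝ)^k * x^(2*k) / (Nat.factorial (2*k))|
        = x^(2*k) / (Nat.factorial (2*k)) := by
      simp [abs_mul, abs_div, abs_pow, Nat.abs_cast, abs_of_pos h0]
    rw [habs, one_div_mul_eq_div]
    have hpow : x^(2*k) ≤ x^(2*m) := pow_le_pow_right₀ hx (by omega)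
    gcongr
  have htri := norm_sub_le (Real.cos x)
    (∑ k ∈ Finset.range (m+1), (-1:ℝ)^k * x^(2*k) / (Nat.factorial (2*k)))
  simp only [Real.norm_eq_abs] at htri
  have hsum : (1 + ∑ k ∈ Finset.range (m+1), (1:ℝ)/(Nat.factorial (2*k))) * x^(2*m)
      = x^(2*m) + ∑ k ∈ Finset.range (m+1), (1/(Nat.factorial (2*k) : ℝ)) * x^(2*m) := by
    rw [add_mul, one_mul, Finset.sum_mul]
  rw [hsum]
  linarith

lemma sin_poly_bound (m : ℕ) (x : ℝ) (hx : 1 ≤ x) :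
    |Real.sin x - ∑ k ∈ Finset.range (m+1), (-1:ℝ)^k * x^(2*k+1) / (Nat.factorial (2*k+1))|
      ≤ (1 + ∑ k ∈ Finset.range (m+1), (1:ℝ)/(Nat.factorial (2*k+1))) * x^(2*m+1) := by
  have h0 : (0:ℝ) < x := lt_of_lt_of_le one_pos hx
  have h1 : |Real.sin x| ≤ 1 := Real.abs_sin_le_one x
  have hxm : (1:ℝ) ≤ x^(2*m+1) := one_le_pow₀ hx
  have h2 : |∑ k ∈ Finset.range (m+1), (-1:ℝ)^k * x^(2*k+1) / (Nat.factorial (2*k+1))|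
      ≤ ∑ k ∈ Finset.range (m+1), (1/(Nat.factorial (2*k+1) : ℝ)) * x^(2*m+1) := by
    refine (Finset.abs_sum_le_sum_abs _ _).trans (Finset.sum_le_sum ?_)
    intro k hk
    have hk' : k ≤ m := by exact Nat.lt_succ_iff.mp (Finset.mem_range.mp hk)
    have habs : |(-1:ℝ)^k * x^(2*k+1) / (Nat.factorial (2*k+1))|
        = x^(2*k+1) / (Nat.factorial (2*k+1)) := by
      simp [abs_mul, abs_div, abs_pow, Nat.abs_cast, abs_of_pos h0]
    rw [habs, one_div_mul_eq_div]
    have hpow : x^(2*k+1) ≤ x^(2*m+1) := pow_le_pow_right₀ hx (by omega)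
    gcongr
  have htri := norm_sub_le (Real.sin x)
    (∑ k ∈ Finset.range (m+1), (-1:ℝ)^k * x^(2*k+1) / (Nat.factorial (2*k+1)))
  simp only [Real.norm_eq_abs] at htri
  have hsum : (1 + ∑ k ∈ Finset.range (m+1), (1:ℝ)/(Nat.factorial (2*k+1))) * x^(2*m+1)
      = x^(2*m+1) + ∑ k ∈ Finset.range (m+1), (1/(Nat.factorial (2*k+1) : ℝ)) * x^(2*m+1) := by
    rw [add_mul, one_mul, Finset.sum_mul]
  rw [hsum]
  linarith

lemma x2_Tcos_eq (m : ℕ) (x : ℝ) (hx : x ≠ 0) :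
    x^2 * Tcos (m+2) x - ((2*(m:ℝ)+4)*(2*(m:ℝ)+3))
      = (-1:ℝ)^(m+2) * (Nat.factorial (2*(m+2))) *
        (Real.cos x - ∑ k ∈ Finset.range (m+1), (-1:ℝ)^k * x^(2*k) / (Nat.factorial (2*k)))
          / x^(2*m+2) := by
  rw [Tcos, if_neg hx, Finset.sum_range_succ]
  have hF : ((Nat.factorial (2*(m+2))):ℝ)
      = ((2*(m:ℝ)+4)*(2*(m:ℝ)+3)) * (Nat.factorial (2*(m+1))) := by
    have h : 2*(m+2) = (2*(m+1)+1)+1 := by ring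
    rw [h, Nat.factorial_succ, Nat.factorial_succ]
    push_cast
    ring
  have hs : ((-1:ℝ)^(m+2)) * ((-1:ℝ)^(m+1)) = -1 := by
    rw [← pow_add]
    exact Odd.neg_one_pow ⟨m+1, by ring⟩
  have hGne : ((Nat.factorial (2*(m+1)):ℝ)) ≠ 0 := by
    exact_mod_cast (Nat.factorial_pos _).ne'
  have hXne : x^(2*(m+2)) ≠ 0 := pow_ne_zero _ hx
  have hxe : x^2 * x^(2*(m+1)) = x^(2*(m+2)) := by ring
  have key1 : x^2 * ((-1:ℝ)^(m+2) * (Nat.factorial (2*(m+2))) / x^(2*(m+2))) *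
      ((-1:ℝ)^(m+1) * x^(2*(m+1)) / (Nat.factorial (2*(m+1))))
      = -((2*(m:ℝ)+4)*(2*(m:ℝ)+3)) := by
    calc x^2 * ((-1:ℝ)^(m+2) * (Nat.factorial (2*(m+2))) / x^(2*(m+2))) *
          ((-1:ℝ)^(m+1) * x^(2*(m+1)) / (Nat.factorial (2*(m+1))))
        = ((-1:ℝ)^(m+2) * (-1:ℝ)^(m+1)) * ((Nat.factorial (2*(m+2)) : ℝ) *
            (x^2 * x^(2*(m+1))) / ((Nat.factorial (2*(m+1))) * x^(2*(m+2)))) := by ring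
      _ = ((-1:ℝ)^(m+2) * (-1:ℝ)^(m+1)) * ((Nat.factorial (2*(m+2)) : ℝ) *
            x^(2*(m+2)) / ((Nat.factorial (2*(m+1))) * x^(2*(m+2)))) := by rw [hxe]
      _ = -((2*(m:ℝ)+4)*(2*(m:ℝ)+3)) := by
          rw [hs, hF]
          field_simp
  have e4 : x^2 / x^(2*(m+2)) = 1 / x^(2*m+2) := by
    rw [div_eq_div_iff hXne (pow_ne_zero _ hx)]
    ring
  have key2 : x^2 * ((-1:ℝ)^(m+2) * (Nat.factorial (2*(m+2))) / x^(2*(m+2))) *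
      (Real.cos x - ∑ k ∈ Finset.range (m+1), (-1:ℝ)^k * x^(2*k) / (Nat.factorial (2*k)))
      = (-1:ℝ)^(m+2) * (Nat.factorial (2*(m+2))) *
        (Real.cos x - ∑ k ∈ Finset.range (m+1), (-1:ℝ)^k * x^(2*k) / (Nat.factorial (2*k)))
          / x^(2*m+2) := by
    calc x^2 * ((-1:ℝ)^(m+2) * (Nat.factorial (2*(m+2))) / x^(2*(m+2))) *
          (Real.cos x - ∑ k ∈ Finset.range (m+1), (-1:ℝ)^k * x^(2*k) / (Nat.factorial (2*k)))
        = ((-1:ℝ)^(m+2) * (Nat.factorial (2*(m+2))) *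
            (Real.cos x - ∑ k ∈ Finset.range (m+1), (-1:ℝ)^k * x^(2*k) / (Nat.factorial (2*k))))
            * (x^2 / x^(2*(m+2))) := by ring
      _ = ((-1:ℝ)^(m+2) * (Nat.factorial (2*(m+2))) *
            (Real.cos x - ∑ k ∈ Finset.range (m+1), (-1:ℝ)^k * x^(2*k) / (Nat.factorial (2*k))))
            * (1 / x^(2*m+2)) := by rw [e4]
      _ = _ := by ring
  linear_combination key2 - key1

lemma x2_Tsin_eq (m : ℕ) (x : ℝ) (hx : x ≠ 0) :
    x^2 * Tsin (m+2) x - ((2*(m:ℝ)+5)*(2*(m:ℝ)+4))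
      = (-1:ℝ)^(m+2) * (Nat.factorial (2*(m+2)+1)) *
        (Real.sin x - ∑ k ∈ Finset.range (m+1), (-1:ℝ)^k * x^(2*k+1) / (Nat.factorial (2*k+1)))
          / x^(2*m+3) := by
  rw [Tsin, if_neg hx, Finset.sum_range_succ]
  have hF : ((Nat.factorial (2*(m+2)+1)):ℝ)
      = ((2*(m:ℝ)+5)*(2*(m:ℝ)+4)) * (Nat.factorial (2*(m+1)+1)) := by
    have h : 2*(m+2)+1 = (2*(m+1)+1+1)+1 := by ring
    rw [h, Nat.factorial_succ, Nat.factorial_succ]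
    push_cast
    ring
  have hs : ((-1:ℝ)^(m+2)) * ((-1:ℝ)^(m+1)) = -1 := by
    rw [← pow_add]
    exact Odd.neg_one_pow ⟨m+1, by ring⟩
  have hGne : ((Nat.factorial (2*(m+1)+1):ℝ)) ≠ 0 := by
    exact_mod_cast (Nat.factorial_pos _).ne'
  have hXne : x^(2*(m+2)+1) ≠ 0 := pow_ne_zero _ hx
  have hxe : x^2 * x^(2*(m+1)+1) = x^(2*(m+2)+1) := by ring
  have key1 : x^2 * ((-1:ℝ)^(m+2) * (Nat.factorial (2*(m+2)+1)) / x^(2*(m+2)+1)) *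
      ((-1:ℝ)^(m+1) * x^(2*(m+1)+1) / (Nat.factorial (2*(m+1)+1)))
      = -((2*(m:ℝ)+5)*(2*(m:ℝ)+4)) := by
    calc x^2 * ((-1:ℝ)^(m+2) * (Nat.factorial (2*(m+2)+1)) / x^(2*(m+2)+1)) *
          ((-1:ℝ)^(m+1) * x^(2*(m+1)+1) / (Nat.factorial (2*(m+1)+1)))
        = ((-1:ℝ)^(m+2) * (-1:ℝ)^(m+1)) * ((Nat.factorial (2*(m+2)+1) : ℝ) *
            (x^2 * x^(2*(m+1)+1)) / ((Nat.factorial (2*(m+1)+1)) * x^(2*(m+2)+1))) := by ring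
      _ = ((-1:ℝ)^(m+2) * (-1:ℝ)^(m+1)) * ((Nat.factorial (2*(m+2)+1) : ℝ) *
            x^(2*(m+2)+1) / ((Nat.factorial (2*(m+1)+1)) * x^(2*(m+2)+1))) := by rw [hxe]
      _ = -((2*(m:ℝ)+5)*(2*(m:ℝ)+4)) := by
          rw [hs, hF]
          field_simp
  have e4 : x^2 / x^(2*(m+2)+1) = 1 / x^(2*m+3) := by
    rw [div_eq_div_iff hXne (pow_ne_zero _ hx)]
    ring
  have key2 : x^2 * ((-1:ℝ)^(m+2) * (Nat.factorial (2*(m+2)+1)) / x^(2*(m+2)+1)) *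
      (Real.sin x - ∑ k ∈ Finset.range (m+1), (-1:ℝ)^k * x^(2*k+1) / (Nat.factorial (2*k+1)))
      = (-1:ℝ)^(m+2) * (Nat.factorial (2*(m+2)+1)) *
        (Real.sin x - ∑ k ∈ Finset.range (m+1), (-1:ℝ)^k * x^(2*k+1) / (Nat.factorial (2*k+1)))
          / x^(2*m+3) := by
    calc x^2 * ((-1:ℝ)^(m+2) * (Nat.factorial (2*(m+2)+1)) / x^(2*(m+2)+1)) *
          (Real.sin x - ∑ k ∈ Finset.range (m+1), (-1:ℝ)^k * x^(2*k+1) / (Nat.factorial (2*k+1)))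
        = ((-1:ℝ)^(m+2) * (Nat.factorial (2*(m+2)+1)) *
            (Real.sin x - ∑ k ∈ Finset.range (m+1), (-1:ℝ)^k * x^(2*k+1) / (Nat.factorial (2*k+1))))
            * (x^2 / x^(2*(m+2)+1)) := by ring
      _ = ((-1:ℝ)^(m+2) * (Nat.factorial (2*(m+2)+1)) *
            (Real.sin x - ∑ k ∈ Finset.range (m+1), (-1:ℝ)^k * x^(2*k+1) / (Nat.factorial (2*k+1))))
            * (1 / x^(2*m+3)) := by rw [e4]
      _ = _ := by ring
  linear_combination key2 - key1

lemma tendsto_x2_Tcos (m : ℕ) :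
    Filter.Tendsto (fun x : ℝ => x^2 * Tcos (m+2) x) atTop
      (nhds ((2*(m:ℝ)+4)*(2*(m:ℝ)+3))) := by
  rw [← tendsto_sub_nhds_zero_iff]
  apply squeeze_zero_norm'
    (a := fun x : ℝ => ((Nat.factorial (2*(m+2))) *
      (1 + ∑ k ∈ Finset.range (m+1), (1:ℝ)/(Nat.factorial (2*k)))) / x^2)
  · filter_upwards [eventually_ge_atTop (1:ℝ)] with x hx
    have h0 : (0:ℝ) < x := lt_of_lt_of_le one_pos hx
    have hx0 : x ≠ 0 := h0.ne'
    rw [Real.norm_eq_abs, x2_Tcos_eq m x hx0]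
    have hb := cos_poly_bound m x hx
    have habs : |(-1:ℝ)^(m+2) * (Nat.factorial (2*(m+2))) *
        (Real.cos x - ∑ k ∈ Finset.range (m+1), (-1:ℝ)^k * x^(2*k) / (Nat.factorial (2*k)))
          / x^(2*m+2)|
        = (Nat.factorial (2*(m+2)) : ℝ) *
          |Real.cos x - ∑ k ∈ Finset.range (m+1), (-1:ℝ)^k * x^(2*k) / (Nat.factorial (2*k))|
            / x^(2*m+2) := by
      simp [abs_mul, abs_div, abs_pow, Nat.abs_cast, abs_of_pos h0]
    rw [habs, div_le_div_iff₀ (by positivity) (by positivity)]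
    calc (Nat.factorial (2*(m+2)) : ℝ) *
          |Real.cos x - ∑ k ∈ Finset.range (m+1), (-1:ℝ)^k * x^(2*k) / (Nat.factorial (2*k))| * x^2
        ≤ (Nat.factorial (2*(m+2)) : ℝ) *
            ((1 + ∑ k ∈ Finset.range (m+1), (1:ℝ)/(Nat.factorial (2*k))) * x^(2*m)) * x^2 := by
          exact mul_le_mul_of_nonneg_right (mul_le_mul_of_nonneg_left hb (by positivity))
            (by positivity)
      _ = (Nat.factorial (2*(m+2)) : ℝ) *
            (1 + ∑ k ∈ Finset.range (m+1), (1:ℝ)/(Nat.factorial (2*k))) * x^(2*m+2) := by ring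
  · exact Filter.Tendsto.div_atTop tendsto_const_nhds (tendsto_pow_atTop two_ne_zero)

lemma tendsto_x2_Tsin (m : ℕ) :
    Filter.Tendsto (fun x : ℝ => x^2 * Tsin (m+2) x) atTop
      (nhds ((2*(m:ℝ)+5)*(2*(m:ℝ)+4))) := by
  rw [← tendsto_sub_nhds_zero_iff]
  apply squeeze_zero_norm'
    (a := fun x : ℝ => ((Nat.factorial (2*(m+2)+1)) *
      (1 + ∑ k ∈ Finset.range (m+1), (1:ℝ)/(Nat.factorial (2*k+1)))) / x^2)
  · filter_upwards [eventually_ge_atTop (1:ℝ)] with x hx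
    have h0 : (0:ℝ) < x := lt_of_lt_of_le one_pos hx
    have hx0 : x ≠ 0 := h0.ne'
    rw [Real.norm_eq_abs, x2_Tsin_eq m x hx0]
    have hb := sin_poly_bound m x hx
    have habs : |(-1:ℝ)^(m+2) * (Nat.factorial (2*(m+2)+1)) *
        (Real.sin x - ∑ k ∈ Finset.range (m+1), (-1:ℝ)^k * x^(2*k+1) / (Nat.factorial (2*k+1)))
          / x^(2*m+3)|
        = (Nat.factorial (2*(m+2)+1) : ℝ) *
          |Real.sin x - ∑ k ∈ Finset.range (m+1), (-1:ℝ)^k * x^(2*k+1) / (Nat.factorial (2*k+1))|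
            / x^(2*m+3) := by
      simp [abs_mul, abs_div, abs_pow, Nat.abs_cast, abs_of_pos h0]
    rw [habs, div_le_div_iff₀ (by positivity) (by positivity)]
    calc (Nat.factorial (2*(m+2)+1) : ℝ) *
          |Real.sin x - ∑ k ∈ Finset.range (m+1), (-1:ℝ)^k * x^(2*k+1) / (Nat.factorial (2*k+1))|
            * x^2
        ≤ (Nat.factorial (2*(m+2)+1) : ℝ) *
            ((1 + ∑ k ∈ Finset.range (m+1), (1:ℝ)/(Nat.factorial (2*k+1))) * x^(2*m+1)) * x^2 := by
          exact mul_le_mul_of_nonneg_right (mul_le_mul_of_nonneg_left hb (by positivity))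
            (by positivity)
      _ = (Nat.factorial (2*(m+2)+1) : ℝ) *
            (1 + ∑ k ∈ Finset.range (m+1), (1:ℝ)/(Nat.factorial (2*k+1))) * x^(2*m+3) := by ring
  · exact Filter.Tendsto.div_atTop tendsto_const_nhds (tendsto_pow_atTop two_ne_zero)

theorem Tcos_Tsin_ratio_limits (n : ℕ) (hn : 2 ≤ n) :
    Filter.Tendsto (fun x => Tcos n x / Tsin n x) Filter.atTop
      (nhds ((2 * (n : ℝ) - 1) / (2 * n + 1))) ∧
    Filter.Tendsto (fun x => Tcos n x / Tsin n x) (nhdsWithin 0 {(0:ℝ)}ᶜ) (nhds 1) := by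
  obtain ⟨m, rfl⟩ : ∃ m, n = m + 2 := ⟨n - 2, by omega⟩
  constructor
  · have hA := tendsto_x2_Tcos m
    have hB := tendsto_x2_Tsin m
    have hBne : ((2*(m:ℝ)+5)*(2*(m:ℝ)+4)) ≠ 0 := by positivity
    have h := hA.div hB hBne
    have heq : (fun x : ℝ => (x^2 * Tcos (m+2) x) / (x^2 * Tsin (m+2) x))
        =ᶠ[atTop] fun x : ℝ => Tcos (m+2) x / Tsin (m+2) x := by
      filter_upwards [eventually_gt_atTop (0:ℝ)] with x hx
      exact mul_div_mul_left _ _ (pow_ne_zero 2 hx.ne')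
    have hval : ((2*(m:ℝ)+4)*(2*(m:ℝ)+3)) / ((2*(m:ℝ)+5)*(2*(m:ℝ)+4))
        = (2 * ((m+2 : ℕ):ℝ) - 1) / (2 * ((m+2 : ℕ):ℝ) + 1) := by
      push_cast
      rw [div_eq_div_iff (by positivity) (by positivity)]
      ring
    rw [← hval]
    exact h.congr' heq
  · have hc := tendsto_Tcos_zero (m+2)
    have hs := tendsto_Tsin_zero (m+2)
    have h := hc.div hs one_ne_zero
    rw [div_one] at h
    exact h
end

section
/- For every integer n ≥ 3 and every real x > 0, the double inequality (2n-1)/(2n+1) < T_cos (2n) x / T_sin n x < 1 holds. -/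
noncomputable def sR (n : ℕ) (x : ℝ) : ℝ :=
  (-1 : ℝ) ^ n *
    (Real.sin x - ∑ k ∈ Finset.range n, (-1 : ℝ) ^ k * x ^ (2 * k + 1) / (Nat.factorial (2 * k + 1)))

noncomputable def cR (n : ℕ) (x : ℝ) : ℝ :=
  (-1 : ℝ) ^ n *
    (Real.cos x - ∑ k ∈ Finset.range n, (-1 : ℝ) ^ k * x ^ (2 * k) / (Nat.factorial (2 * k)))

lemma sR_zero (n : ℕ) : sR n 0 = 0 := by
  simp [sR]

lemma cR_zero (n : ℕ) : cR (n + 1) 0 = 0 := by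
  unfold cR
  rw [Finset.sum_range_succ']
  simp

lemma pos_of_hasDerivAt {f g : ℝ → ℝ} (hf0 : f 0 = 0)
    (hd : ∀ x, HasDerivAt f (g x) x) (hg : ∀ x, 0 < x → 0 < g x) :
    ∀ x, 0 < x → 0 < f x := by
  intro x hx
  have hmono : StrictMonoOn f (Set.Ici (0:ℝ)) := by
    apply strictMonoOn_of_deriv_pos (convex_Ici 0)
    · exact fun y _ => (hd y).differentiableAt.continuousAt.continuousWithinAt
    · intro y hy
      rw [interior_Ici] at hy
      rw [(hd y).deriv]
      exact hg y hy
  have := hmono Set.self_mem_Ici (Set.mem_Ici.mpr hx.le) hx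
  rwa [hf0] at this

lemma hasDerivAt_sR (n : ℕ) (x : ℝ) : HasDerivAt (sR n) (cR n x) x := by
  unfold sR cR
  have hsum : HasDerivAt
      (fun x : ℝ => ∑ k ∈ Finset.range n, (-1:ℝ)^k * x^(2*k+1) / (Nat.factorial (2*k+1)))
      (∑ k ∈ Finset.range n, (-1:ℝ)^k * x^(2*k) / (Nat.factorial (2*k))) x := by
    apply HasDerivAt.fun_sum
    intro k _
    have h1 : HasDerivAt (fun x : ℝ => x ^ (2*k+1)) ((2*k+1 : ℝ) * x ^ (2*k)) x := by
      simpa using hasDerivAt_pow (2*k+1) x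
    have h2 := (h1.const_mul ((-1:ℝ)^k)).div_const (Nat.factorial (2*k+1))
    refine h2.congr_deriv ?_
    have hf : (Nat.factorial (2*k+1) : ℝ) = (2*k+1 : ℝ) * (Nat.factorial (2*k) : ℝ) := by
      rw [Nat.factorial_succ]; push_cast; ring
    have h0 : (Nat.factorial (2*k) : ℝ) ≠ 0 := Nat.cast_ne_zero.mpr (Nat.factorial_ne_zero _)
    have h0' : (2*k+1 : ℝ) ≠ 0 := by positivity
    rw [hf]
    field_simp
  exact ((Real.hasDerivAt_sin x).sub hsum).const_mul _

lemma hasDerivAt_cR (n : ℕ) (x : ℝ) : HasDerivAt (cR (n + 1)) (sR n x) x := by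
  have heq : cR (n+1) = fun x : ℝ => (-1:ℝ)^(n+1) *
      (Real.cos x - ((∑ k ∈ Finset.range n,
        (-1:ℝ)^(k+1) * x^(2*(k+1)) / (Nat.factorial (2*(k+1)))) + 1)) := by
    funext y
    unfold cR
    rw [Finset.sum_range_succ']
    norm_num
  rw [heq]
  have hsum : HasDerivAt
      (fun x : ℝ => ∑ k ∈ Finset.range n, (-1:ℝ)^(k+1) * x^(2*(k+1)) / (Nat.factorial (2*(k+1))))
      (∑ k ∈ Finset.range n, (-1:ℝ)^(k+1) * x^(2*k+1) / (Nat.factorial (2*k+1))) x := by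
    apply HasDerivAt.fun_sum
    intro k _
    have h1 : HasDerivAt (fun x : ℝ => x ^ (2*(k+1))) ((2*(k+1) : ℝ) * x ^ (2*k+1)) x := by
      have e : 2*(k+1) - 1 = 2*k+1 := by omega
      have h := hasDerivAt_pow (2*(k+1)) x
      rw [e] at h
      refine h.congr_deriv ?_
      push_cast; ring
    have h2 := (h1.const_mul ((-1:ℝ)^(k+1))).div_const (Nat.factorial (2*(k+1)))
    refine h2.congr_deriv ?_
    have hf : (Nat.factorial (2*(k+1)) : ℝ) = (2*(k+1) : ℝ) * (Nat.factorial (2*k+1) : ℝ) := by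
      have : 2*(k+1) = (2*k+1) + 1 := by omega
      rw [this, Nat.factorial_succ]; push_cast; ring
    have h0 : (Nat.factorial (2*k+1) : ℝ) ≠ 0 := Nat.cast_ne_zero.mpr (Nat.factorial_ne_zero _)
    have h0' : (2*(k+1) : ℝ) ≠ 0 := by positivity
    rw [hf]
    field_simp
  have h := ((Real.hasDerivAt_cos x).sub (hsum.add_const 1)).const_mul ((-1:ℝ)^(n+1))
  refine h.congr_deriv ?_
  unfold sR
  have hs : ∑ k ∈ Finset.range n, (-1:ℝ)^(k+1) * x^(2*k+1) / (Nat.factorial (2*k+1))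
      = - ∑ k ∈ Finset.range n, (-1:ℝ)^k * x^(2*k+1) / (Nat.factorial (2*k+1)) := by
    rw [← Finset.sum_neg_distrib]
    apply Finset.sum_congr rfl
    intro k _
    ring
  rw [hs]
  ring

lemma b2 : ∀ x : ℝ, 0 < x → 0 < Real.cos x - 1 + x^2/2 := by
  apply pos_of_hasDerivAt (g := fun x => x - Real.sin x)
  · norm_num
  · intro x
    have h := ((Real.hasDerivAt_cos x).sub_const 1).add ((hasDerivAt_pow 2 x).div_const 2)
    refine h.congr_deriv ?_
    push_cast; ring
  · intro x hx; have := Real.sin_lt hx; linarith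

lemma b3 : ∀ x : ℝ, 0 < x → 0 < Real.sin x - x + x^3/6 := by
  apply pos_of_hasDerivAt (g := fun x => Real.cos x - 1 + x^2/2)
  · norm_num
  · intro x
    have h := ((Real.hasDerivAt_sin x).sub (hasDerivAt_id x)).add ((hasDerivAt_pow 3 x).div_const 6)
    refine h.congr_deriv ?_
    push_cast; ring
  · exact b2

lemma b4 : ∀ x : ℝ, 0 < x → 0 < 1 - x^2/2 + x^4/24 - Real.cos x := by
  apply pos_of_hasDerivAt (g := fun x => Real.sin x - x + x^3/6)
  · norm_num
  · intro x
    have h := (((hasDerivAt_const x (1:ℝ)).sub ((hasDerivAt_pow 2 x).div_const 2)).add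
      ((hasDerivAt_pow 4 x).div_const 24)).sub (Real.hasDerivAt_cos x)
    refine h.congr_deriv ?_
    push_cast; ring
  · exact b3

lemma b5 : ∀ x : ℝ, 0 < x → 0 < x - x^3/6 + x^5/120 - Real.sin x := by
  apply pos_of_hasDerivAt (g := fun x => 1 - x^2/2 + x^4/24 - Real.cos x)
  · norm_num
  · intro x
    have h := (((hasDerivAt_id x).sub ((hasDerivAt_pow 3 x).div_const 6)).add
      ((hasDerivAt_pow 5 x).div_const 120)).sub (Real.hasDerivAt_sin x)
    refine h.congr_deriv ?_
    push_cast; ring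
  · exact b4

lemma b6 : ∀ x : ℝ, 0 < x → 0 < Real.cos x - 1 + x^2/2 - x^4/24 + x^6/720 := by
  apply pos_of_hasDerivAt (g := fun x => x - x^3/6 + x^5/120 - Real.sin x)
  · norm_num
  · intro x
    have h := ((((Real.hasDerivAt_cos x).sub_const 1).add ((hasDerivAt_pow 2 x).div_const 2)).sub
      ((hasDerivAt_pow 4 x).div_const 24)).add ((hasDerivAt_pow 6 x).div_const 720)
    refine h.congr_deriv ?_
    push_cast; ring
  · exact b5

lemma base_ineq : ∀ x : ℝ, 0 < x → 0 < 2*x + x * Real.cos x - 3 * Real.sin x := by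
  intro x hx
  rcases le_or_gt x (17/5) with h | h
  · have h5 := b5 x hx
    have h6 := b6 x hx
    have hx2 : x^2 ≤ 12 := by nlinarith
    have key : 0 ≤ x^5 * (12 - x^2) := mul_nonneg (pow_pos hx 5).le (by linarith)
    nlinarith [mul_pos hx h6, h5, key]
  · have hs : Real.sin x ≤ 1 := Real.sin_le_one x
    have hc : -1 ≤ Real.cos x := Real.neg_one_le_cos x
    nlinarith

lemma sR_one (x : ℝ) : sR 1 x = x - Real.sin x := by
  simp [sR, Finset.sum_range_one, Nat.factorial]

lemma cR_one (x : ℝ) : cR 1 x = 1 - Real.cos x := by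
  simp [cR, Finset.sum_range_one, Nat.factorial]

lemma sR_two (x : ℝ) : sR 2 x = Real.sin x - x + x^3/6 := by
  simp [sR, Finset.sum_range_succ, Nat.factorial]; ring

lemma cR_two (x : ℝ) : cR 2 x = Real.cos x - 1 + x^2/2 := by
  simp [cR, Finset.sum_range_succ, Nat.factorial]; ring

lemma sR_pos (m : ℕ) : ∀ x, 0 < x → 0 < sR (m + 1) x := by
  induction m with
  | zero =>
    intro x hx
    rw [sR_one]
    have := Real.sin_lt hx
    linarith
  | succ m ih =>
    have hc : ∀ x, 0 < x → 0 < cR (m + 2) x :=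
      pos_of_hasDerivAt (cR_zero (m + 1)) (hasDerivAt_cR (m + 1)) ih
    exact pos_of_hasDerivAt (sR_zero (m + 2)) (hasDerivAt_sR (m + 2)) hc

lemma cR_pos (m : ℕ) : ∀ x, 0 < x → 0 < cR (m + 2) x :=
  pos_of_hasDerivAt (cR_zero (m + 1)) (hasDerivAt_cR (m + 1)) (sR_pos m)

lemma phi_pos (m : ℕ) :
    ∀ x, 0 < x → 0 < (2*(m:ℝ)+3) * sR (m + 1) x - x * cR (m + 1) x := by
  induction m with
  | zero =>
    intro x hx
    rw [sR_one, cR_one]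
    have := base_ineq x hx
    norm_num
    linarith
  | succ m ih =>
    have hpsi : ∀ x, 0 < x → 0 < (2*(m:ℝ)+4) * cR (m + 2) x - x * sR (m + 1) x := by
      apply pos_of_hasDerivAt
        (g := fun x => (2*(m:ℝ)+3) * sR (m + 1) x - x * cR (m + 1) x)
      · rw [cR_zero, sR_zero]; ring
      · intro x
        have h := ((hasDerivAt_cR (m + 1) x).const_mul ((2:ℝ)*(m:ℝ)+4)).sub
          ((hasDerivAt_id' (𝕜 := ℝ) x).mul (hasDerivAt_sR (m + 1) x))
        refine h.congr_deriv ?_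
        ring
      · exact ih
    intro x hx
    have h := pos_of_hasDerivAt
        (f := fun x => (2*((m:ℝ)+1)+3) * sR (m + 2) x - x * cR (m + 2) x)
        (g := fun x => (2*(m:ℝ)+4) * cR (m + 2) x - x * sR (m + 1) x)
        (by simp [sR_zero, cR_zero])
        (fun x => by
          have h := ((hasDerivAt_sR (m + 2) x).const_mul ((2:ℝ)*((m:ℝ)+1)+3)).sub
            ((hasDerivAt_id' (𝕜 := ℝ) x).mul (hasDerivAt_cR (m + 1) x))
          refine h.congr_deriv ?_
          ring)
        hpsi x hx
    push_cast
    push_cast at h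
    linarith

lemma alpha_pos (m : ℕ) :
    ∀ x, 0 < x → 0 < x * cR (m + 2) x - (2*(m:ℝ)+3) * sR (m + 2) x := by
  induction m with
  | zero =>
    intro x hx
    rw [sR_two, cR_two]
    have := base_ineq x hx
    norm_num
    nlinarith [base_ineq x hx]
  | succ m ih =>
    have hbeta : ∀ x, 0 < x → 0 < x * sR (m + 2) x - (2*(m:ℝ)+4) * cR (m + 3) x := by
      apply pos_of_hasDerivAt
        (g := fun x => x * cR (m + 2) x - (2*(m:ℝ)+3) * sR (m + 2) x)
      · rw [cR_zero, sR_zero]; ring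
      · intro x
        have h := ((hasDerivAt_id' (𝕜 := ℝ) x).mul (hasDerivAt_sR (m + 2) x)).sub
          ((hasDerivAt_cR (m + 2) x).const_mul ((2:ℝ)*(m:ℝ)+4))
        refine h.congr_deriv ?_
        ring
      · exact ih
    intro x hx
    have h := pos_of_hasDerivAt
        (f := fun x => x * cR (m + 3) x - (2*((m:ℝ)+1)+3) * sR (m + 3) x)
        (g := fun x => x * sR (m + 2) x - (2*(m:ℝ)+4) * cR (m + 3) x)
        (by simp [sR_zero, cR_zero])
        (fun x => by
          have h := ((hasDerivAt_id' (𝕜 := ℝ) x).mul (hasDerivAt_cR (m + 2) x)).sub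
            ((hasDerivAt_sR (m + 3) x).const_mul ((2:ℝ)*((m:ℝ)+1)+3))
          refine h.congr_deriv ?_
          ring)
        hbeta x hx
    push_cast
    push_cast at h
    linarith

theorem Tcos_Tsin_ratio_bounds (n : ℕ) (hn : 3 ≤ n) (x : ℝ) (hx : 0 < x) :
    (2 * (n : ℝ) - 1) / (2 * n + 1) < Tcos n x / Tsin n x ∧
    Tcos n x / Tsin n x < 1 := by
  obtain ⟨m, rfl⟩ : ∃ m, n = m + 2 := ⟨n - 2, by omega⟩
  have hxne : x ≠ 0 := hx.ne'
  have hs : 0 < sR (m + 2) x := sR_pos (m + 1) x hx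
  have hphi := phi_pos (m + 1) x hx
  have halpha := alpha_pos m x hx
  push_cast at hphi
  have hTsin : Tsin (m + 2) x =
      (Nat.factorial (2 * (m + 2) + 1) : ℝ) / x ^ (2 * (m + 2) + 1) * sR (m + 2) x := by
    unfold Tsin sR
    rw [if_neg hxne]
    ring
  have hTcos : Tcos (m + 2) x =
      (Nat.factorial (2 * (m + 2)) : ℝ) / x ^ (2 * (m + 2)) * cR (m + 2) x := by
    unfold Tcos cR
    rw [if_neg hxne]
    ring
  have hfact : (Nat.factorial (2 * (m + 2) + 1) : ℝ)
      = (2 * (m : ℝ) + 5) * (Nat.factorial (2 * (m + 2)) : ℝ) := by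
    rw [Nat.factorial_succ]
    push_cast
    ring
  have hfne : (0:ℝ) < (Nat.factorial (2 * (m + 2)) : ℝ) :=
    Nat.cast_pos.mpr (Nat.factorial_pos _)
  have hxp : (0:ℝ) < x ^ (2 * (m + 2)) := pow_pos hx _
  have hratio : Tcos (m + 2) x / Tsin (m + 2) x
      = (x * cR (m + 2) x) / ((2 * (m : ℝ) + 5) * sR (m + 2) x) := by
    rw [hTcos, hTsin, hfact, pow_succ]
    field_simp
  have hK : (0:ℝ) < 2 * (m : ℝ) + 5 := by positivity
  have hKs : (0:ℝ) < (2 * (m : ℝ) + 5) * sR (m + 2) x := mul_pos hK hs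
  constructor
  · rw [hratio]
    push_cast
    rw [div_lt_div_iff₀ (by positivity) (by push_cast at hKs ⊢; linarith)]
    nlinarith [mul_lt_mul_of_pos_left (by linarith : (2*(m:ℝ)+3) * sR (m + 2) x < x * cR (m + 2) x) hK]
  · rw [hratio, div_lt_one hKs]
    linarith
end

section
/- For every natural number n, the function x ↦ E n x is positive on ℝ, strictly increasing on ℝ, and logarithmically convex on ℝ (i.e., x ↦ ln (E n x) is convex on ℝ). -/
open Real MeasureTheory intervalIntegral Set

noncomputable def In (n : ℕ) (x : ℝ) : ℝ := ∫ t in (0:ℝ)..1, (1-t)^n * Real.exp (x*t)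

lemma In_cont (n : ℕ) (x : ℝ) : Continuous fun t : ℝ => (1-t)^n * Real.exp (x*t) := by
  fun_prop

lemma In_intable (n : ℕ) (x : ℝ) :
    IntervalIntegrable (fun t : ℝ => (1-t)^n * Real.exp (x*t)) volume 0 1 :=
  (In_cont n x).intervalIntegrable _ _

lemma In_pos (n : ℕ) (x : ℝ) : 0 < In n x := by
  apply intervalIntegral.intervalIntegral_pos_of_pos_on (In_intable n x) _ one_pos
  intro t ht
  have : (0:ℝ) < 1 - t := by linarith [ht.2]
  positivity

lemma In_lt (n : ℕ) {x y : ℝ} (hxy : x < y) : In n x < In n y := by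
  apply intervalIntegral.integral_lt_integral_of_continuousOn_of_le_of_exists_lt one_pos
    (In_cont n x).continuousOn (In_cont n y).continuousOn
  · intro t ht
    have h1 : (0:ℝ) ≤ 1 - t := by linarith [ht.2]
    have : x * t ≤ y * t := by nlinarith [ht.1]
    gcongr
  · refine ⟨1/2, by norm_num, ?_⟩
    have h1 : (0:ℝ) < (1 - 1/2 : ℝ)^n := by norm_num
    have : x * (1/2) < y * (1/2) := by linarith
    gcongr

lemma In_zero (n : ℕ) : In n 0 = 1/(n+1) := by
  have h : ∀ t ∈ Set.uIcc (0:ℝ) 1, HasDerivAt (fun s : ℝ => -(1-s)^(n+1)/(n+1)) ((1-t)^n) t := by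
    intro t _
    have h1 : HasDerivAt (fun s : ℝ => (1-s)) (-1) t := by
      simpa using (hasDerivAt_id t).const_sub 1
    have h2 := (h1.fun_pow (n+1))
    have h3 := (h2.neg.div_const ((n:ℝ)+1))
    convert h3 using 1
    case e'_9 =>
      simp only [Nat.add_sub_cancel]
      push_cast
      field_simp
    all_goals rfl
  have key := intervalIntegral.integral_eq_sub_of_hasDerivAt h
    (by apply Continuous.intervalIntegrable; fun_prop)
  simp only [In, zero_mul, Real.exp_zero, mul_one]
  rw [key]
  simp [neg_div]

lemma In_base (x : ℝ) : x * In 0 x = Real.exp x - 1 := by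
  have h : ∀ t ∈ Set.uIcc (0:ℝ) 1, HasDerivAt (fun s : ℝ => Real.exp (x*s)) (x * Real.exp (x*t)) t := by
    intro t _
    have h1 : HasDerivAt (fun s : ℝ => x*s) x t := by
      simpa using (hasDerivAt_id t).const_mul x
    simpa [mul_comm] using h1.exp
  have key := intervalIntegral.integral_eq_sub_of_hasDerivAt h
    (by apply Continuous.intervalIntegrable; fun_prop)
  simp only [mul_one, mul_zero, Real.exp_zero] at key
  rw [In]
  simp only [pow_zero, one_mul]
  rw [← intervalIntegral.integral_const_mul, key]

lemma In_rec (n : ℕ) (x : ℝ) : x * In (n+1) x = (n+1) * In n x - 1 := by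
  have hu : ∀ t ∈ Set.uIcc (0:ℝ) 1, HasDerivAt (fun s : ℝ => (1-s)^(n+1))
      (-((n+1) * (1-t)^n)) t := by
    intro t _
    have h1 : HasDerivAt (fun s : ℝ => (1-s)) (-1) t := by
      simpa using (hasDerivAt_id t).const_sub 1
    have := h1.fun_pow (n+1)
    convert this using 1
    case e'_9 =>
      simp only [Nat.add_sub_cancel]
      push_cast
      ring
    all_goals rfl
  have hv : ∀ t ∈ Set.uIcc (0:ℝ) 1, HasDerivAt (fun s : ℝ => Real.exp (x*s))
      (x * Real.exp (x*t)) t := by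
    intro t _
    have h1 : HasDerivAt (fun s : ℝ => x*s) x t := by
      simpa using (hasDerivAt_id t).const_mul x
    simpa [mul_comm] using h1.exp
  have key := intervalIntegral.integral_mul_deriv_eq_deriv_mul hu hv
    (by apply Continuous.intervalIntegrable; fun_prop)
    (by apply Continuous.intervalIntegrable; fun_prop)
  -- key : ∫ (1-t)^(n+1) * (x * exp (x t)) = ... - ∫ (-((n+1)(1-t)^n)) * exp (x t)
  have l1 : (∫ t in (0:ℝ)..1, (1-t)^(n+1) * (x * Real.exp (x*t)))
      = x * In (n+1) x := by
    rw [In, ← intervalIntegral.integral_const_mul]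
    congr 1; ext t; ring
  have l2 : (∫ t in (0:ℝ)..1, (-((n+1 : ℝ) * (1-t)^n)) * Real.exp (x*t))
      = -((n+1) * In n x) := by
    rw [In, ← intervalIntegral.integral_const_mul, ← intervalIntegral.integral_neg]
    congr 1; ext t; ring
  rw [l1, l2] at key
  rw [key]
  simp only [sub_self, zero_pow (Nat.succ_ne_zero n), zero_mul, sub_zero, one_pow,
    mul_zero, Real.exp_zero, one_mul, sub_neg_eq_add]
  ring

/-- The `n`-th normalized remainder of the Maclaurin series of the exponential. -/
noncomputable def E (n : ℕ) (x : ℝ) : ℝ :=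
  if x = 0 then 1
  else (Nat.factorial (n + 1)) / x ^ (n + 1) *
    (Real.exp x - ∑ k ∈ Finset.range (n + 1), x ^ k / (Nat.factorial k))

lemma E_eq (n : ℕ) (x : ℝ) : E n x = (n+1) * In n x := by
  rcases eq_or_ne x 0 with rfl | hx
  · rw [E, if_pos rfl, In_zero]
    field_simp
  · rw [E, if_neg hx]
    induction n with
    | zero =>
      have := In_base x
      field_simp [Nat.factorial]
      simp [Finset.sum_range_succ]; linarith [this]
    | succ n ih =>
      have hrec := In_rec n x
      have key : x * ((n+1+1) * In (n+1) x) = (n+1+1) * ((n+1) * In n x - 1) := by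
        rw [← hrec]; ring
      rw [← ih] at key
      have lhs : x * ((Nat.factorial (n+1+1)) / x ^ (n+1+1) *
          (Real.exp x - ∑ k ∈ Finset.range (n+1+1), x ^ k / (Nat.factorial k)))
          = (n+1+1) * ((Nat.factorial (n+1)) / x ^ (n+1) *
          (Real.exp x - ∑ k ∈ Finset.range (n+1), x ^ k / (Nat.factorial k)) - 1) := by
        rw [Finset.sum_range_succ]
        have hfac : (Nat.factorial (n+1+1) : ℝ) = (n+1+1) * Nat.factorial (n+1) := by
          rw [Nat.factorial_succ]; push_cast; ring
        rw [hfac]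
        have hne : (Nat.factorial (n+1) : ℝ) ≠ 0 := by positivity
        generalize (Nat.factorial (n+1) : ℝ) = F at hne ⊢
        generalize (∑ k ∈ Finset.range (n+1), x ^ k / (Nat.factorial k)) = S
        have hxp : x ^ (n+1) ≠ 0 := pow_ne_zero _ hx
        field_simp
        ring
      have := mul_left_cancel₀ hx (lhs.trans key.symm)
      rw [this]; push_cast; ring

lemma In_eq_set (n : ℕ) (x : ℝ) :
    In n x = ∫ t in Set.Ioc (0:ℝ) 1, (1-t)^n * Real.exp (x*t) :=
  intervalIntegral.integral_of_le zero_le_one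

lemma In_holder (n : ℕ) {x y a b : ℝ} (ha : 0 < a) (hb : 0 < b) (hab : a + b = 1) :
    In n (a*x + b*y) ≤ In n x ^ a * In n y ^ b := by
  set μ := volume.restrict (Set.Ioc (0:ℝ) 1) with hμ
  have e : Real.HolderConjugate (1/a) (1/b) := Real.holderConjugate_one_div ha hb hab
  set f : ℝ → ℝ := fun t => ((1-t)^n * Real.exp (x*t)) ^ a with hf
  set g : ℝ → ℝ := fun t => ((1-t)^n * Real.exp (y*t)) ^ b with hg
  have hcont : ∀ (z c : ℝ), 0 ≤ c →
      Continuous (fun t => ((1-t)^n * Real.exp (z*t)) ^ c) := by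
    intro z c hc
    exact (Real.continuous_rpow_const hc).comp (by fun_prop)
  have hnonneg : ∀ (z c : ℝ), ∀ᵐ t ∂μ, 0 ≤ ((1-t)^n * Real.exp (z*t)) ^ c := by
    intro z c
    refine (ae_restrict_iff' measurableSet_Ioc).mpr (Filter.Eventually.of_forall fun t ht => ?_)
    have h1 : (0:ℝ) ≤ 1 - t := by linarith [ht.2]
    exact Real.rpow_nonneg (by positivity) _
  haveI : IsFiniteMeasure μ := by
    constructor
    rw [hμ, Measure.restrict_apply_univ]
    simp [Real.volume_Ioc]
  have hmem : ∀ (z c : ℝ), 0 < c →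
      MemLp (fun t => ((1-t)^n * Real.exp (z*t)) ^ c) (ENNReal.ofReal (1/c)) μ := by
    intro z c hc
    refine MemLp.mono_exponent (q := ⊤) ?_ le_top
    apply memLp_top_of_bound ((hcont z c hc.le).aestronglyMeasurable) ((Real.exp |z|) ^ c)
    refine (ae_restrict_iff' measurableSet_Ioc).mpr (Filter.Eventually.of_forall fun t ht => ?_)
    have h1 : (0:ℝ) ≤ 1 - t := by linarith [ht.2]
    have h2 : (1-t)^n ≤ 1 := pow_le_one₀ h1 (by linarith [ht.1])
    have h3 : Real.exp (z*t) ≤ Real.exp |z| := by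
      apply Real.exp_le_exp.2
      calc z * t ≤ |z * t| := le_abs_self _
        _ = |z| * |t| := abs_mul z t
        _ ≤ |z| * 1 := by
            gcongr
            rw [abs_of_pos ht.1]; exact ht.2
        _ = |z| := mul_one _
    have hb0 : (0:ℝ) ≤ (1-t)^n * Real.exp (z*t) := by positivity
    rw [Real.norm_of_nonneg (Real.rpow_nonneg hb0 _)]
    apply Real.rpow_le_rpow hb0 _ hc.le
    calc (1-t)^n * Real.exp (z*t) ≤ 1 * Real.exp |z| := by
          apply mul_le_mul h2 h3 (Real.exp_pos _).le one_pos.le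
      _ = Real.exp |z| := one_mul _
  have key := MeasureTheory.integral_mul_le_Lp_mul_Lq_of_nonneg e (hnonneg x a) (hnonneg y b)
    (hmem x a ha) (hmem y b hb)
  have l1 : ∫ t, f t * g t ∂μ = In n (a*x + b*y) := by
    rw [In_eq_set]
    refine setIntegral_congr_fun measurableSet_Ioc fun t ht => ?_
    have h1 : (0:ℝ) ≤ 1 - t := by linarith [ht.2]
    have hp : (0:ℝ) ≤ (1-t)^n := by positivity
    simp only [hf, hg]
    rw [Real.mul_rpow hp (Real.exp_pos _).le, Real.mul_rpow hp (Real.exp_pos _).le]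
    rw [← Real.exp_mul, ← Real.exp_mul]
    have : ((1-t)^n) ^ a * Real.exp (x*t*a) * (((1-t)^n) ^ b * Real.exp (y*t*b))
        = (((1-t)^n) ^ a * ((1-t)^n) ^ b) * (Real.exp (x*t*a) * Real.exp (y*t*b)) := by ring
    rw [this, ← Real.rpow_add' hp (by rw [hab]; norm_num), hab, Real.rpow_one,
      ← Real.exp_add]
    ring_nf
  have l2 : ∀ (z c : ℝ), 0 < c →
      (∫ t, (((1-t)^n * Real.exp (z*t)) ^ c) ^ (1/c) ∂μ) = In n z := by
    intro z c hc
    rw [In_eq_set]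
    refine setIntegral_congr_fun measurableSet_Ioc fun t ht => ?_
    have h1 : (0:ℝ) ≤ 1 - t := by linarith [ht.2]
    have hb0 : (0:ℝ) ≤ (1-t)^n * Real.exp (z*t) := by positivity
    rw [← Real.rpow_natCast _ n] at *
    rw [← Real.rpow_mul hb0, mul_one_div_cancel hc.ne', Real.rpow_one]
  rw [l1, l2 x a ha, l2 y b hb, one_div_one_div, one_div_one_div] at key
  exact key

theorem E_pos_strictMono_logConvex (n : ℕ) :
    (∀ x : ℝ, 0 < E n x) ∧ StrictMono (E n) ∧
    ConvexOn ℝ Set.univ (fun x => Real.log (E n x)) := by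
  have hn1 : (0:ℝ) < (n:ℝ)+1 := by positivity
  have hpos : ∀ x : ℝ, 0 < E n x := by
    intro x
    rw [E_eq]
    exact mul_pos hn1 (In_pos n x)
  refine ⟨hpos, ?_, ?_⟩
  · intro x y hxy
    rw [E_eq, E_eq]
    exact mul_lt_mul_of_pos_left (In_lt n hxy) hn1
  · refine convexOn_iff_forall_pos.mpr ⟨convex_univ, fun x _ y _ a b ha hb hab => ?_⟩
    simp only [smul_eq_mul]
    have key : E n (a*x + b*y) ≤ E n x ^ a * E n y ^ b := by
      rw [E_eq, E_eq, E_eq]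
      have hsplit : ((n:ℝ)+1) = ((n:ℝ)+1)^a * ((n:ℝ)+1)^b := by
        rw [← Real.rpow_add hn1, hab, Real.rpow_one]
      calc ((n:ℝ)+1) * In n (a*x+b*y) ≤ ((n:ℝ)+1) * (In n x ^ a * In n y ^ b) :=
            mul_le_mul_of_nonneg_left (In_holder n ha hb hab) hn1.le
        _ = (((n:ℝ)+1) * In n x) ^ a * (((n:ℝ)+1) * In n y) ^ b := by
            rw [Real.mul_rpow hn1.le (In_pos n x).le, Real.mul_rpow hn1.le (In_pos n y).le]
            conv_lhs => rw [hsplit]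
            ring
    have hlog := Real.log_le_log (hpos _) key
    rw [Real.log_mul (Real.rpow_pos_of_pos (hpos x) a).ne' (Real.rpow_pos_of_pos (hpos y) b).ne', Real.log_rpow (hpos x),
      Real.log_rpow (hpos y)] at hlog
    exact hlog
end

section
/- For every natural number n, the function x ↦ E n x is absolutely monotonic on ℝ, that is, for every k ∈ ℕ₀ the k-th derivative of x ↦ E n x is nonnegative at every real x. -/
open Finset


/-- Coefficient of the hypergeometric-type series. -/
noncomputable def Ec (a b j : ℕ) : ℝ :=
  (Nat.factorial (a + j) : ℝ) / (Nat.factorial j * Nat.factorial (a + b + 1 + j))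

/-- The series `∑ (a+j)!/(j! (a+b+1+j)!) x^j`. -/
noncomputable def Sf (a b : ℕ) (x : ℝ) : ℝ := ∑' j : ℕ, Ec a b j * x ^ j

lemma Ec_nonneg (a b j : ℕ) : 0 ≤ Ec a b j := by
  unfold Ec; positivity

lemma Ec_le (a b j : ℕ) : Ec a b j ≤ 1 / Nat.factorial j := by
  unfold Ec
  rw [div_le_div_iff₀ (by positivity) (by positivity)]
  have h : (Nat.factorial (a + j) : ℝ) ≤ Nat.factorial (a + b + 1 + j) := by
    exact_mod_cast Nat.factorial_le (by omega)
  calc (Nat.factorial (a + j) : ℝ) * Nat.factorial j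
      ≤ (Nat.factorial (a + b + 1 + j) : ℝ) * Nat.factorial j := by
        apply mul_le_mul_of_nonneg_right h (by positivity)
    _ = 1 * (Nat.factorial j * Nat.factorial (a + b + 1 + j)) := by ring

lemma summable_norm_Ec (a b : ℕ) (x : ℝ) :
    Summable (fun j => ‖Ec a b j * x ^ j‖) := by
  apply Summable.of_nonneg_of_le (fun j => norm_nonneg _)
    (fun j => ?_) (Real.summable_pow_div_factorial |x|)
  rw [norm_mul, norm_pow, Real.norm_eq_abs, Real.norm_eq_abs,
    abs_of_nonneg (Ec_nonneg a b _)]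
  calc Ec a b j * |x| ^ j ≤ (1 / Nat.factorial j) * |x| ^ j :=
        mul_le_mul_of_nonneg_right (Ec_le a b j) (by positivity)
    _ = |x| ^ j / Nat.factorial j := by ring

lemma summable_Ec (a b : ℕ) (x : ℝ) : Summable (fun j => Ec a b j * x ^ j) :=
  (summable_norm_Ec a b x).of_norm

lemma Ec_succ (a b j : ℕ) : ((j:ℝ) + 1) * Ec a b (j + 1) = Ec (a + 1) b j := by
  unfold Ec
  have h1 : a + (j + 1) = a + 1 + j := by omega
  have h2 : a + b + 1 + (j + 1) = a + 1 + b + 1 + j := by omega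
  rw [h1, h2, Nat.factorial_succ]
  have hj : (0:ℝ) < Nat.factorial j := by positivity
  have hz : (0:ℝ) < Nat.factorial (a + 1 + b + 1 + j) := by positivity
  field_simp
  push_cast
  ring

lemma summable_u (R : ℝ) : Summable (fun j : ℕ => (j : ℝ) * R ^ (j - 1) / Nat.factorial j) := by
  rw [← summable_nat_add_iff 1]
  have : (fun j : ℕ => ((j + 1 : ℕ) : ℝ) * R ^ ((j + 1) - 1) / Nat.factorial (j + 1))
      = fun j : ℕ => R ^ j / Nat.factorial j := by
    funext j
    have : ((j:ℕ) + 1 - 1) = j := rfl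
    rw [this, Nat.factorial_succ]
    push_cast
    have hj : (0:ℝ) < Nat.factorial j := by positivity
    field_simp
  rw [this]
  exact Real.summable_pow_div_factorial R

lemma hasDerivAt_Sf (a b : ℕ) (x : ℝ) : HasDerivAt (Sf a b) (Sf (a + 1) b x) x := by
  set R : ℝ := |x| + 1 with hR
  have hxR : x ∈ Metric.ball (0:ℝ) R := by
    rw [Metric.mem_ball, dist_zero_right, Real.norm_eq_abs]
    linarith
  have key : HasDerivAt (fun y => ∑' j : ℕ, Ec a b j * y ^ j)
      (∑' j : ℕ, Ec a b j * ((j : ℝ) * x ^ (j - 1))) x := by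
    apply hasDerivAt_tsum_of_isPreconnected
      (u := fun j : ℕ => (j : ℝ) * R ^ (j - 1) / Nat.factorial j)
      (summable_u R) Metric.isOpen_ball ((convex_ball (0:ℝ) R).isPreconnected)
      (fun j y _ => (hasDerivAt_pow j y).const_mul (Ec a b j))
      (fun j y hy => ?_) hxR ((summable_Ec a b x)) hxR
    · rw [norm_mul, norm_mul, Real.norm_eq_abs, Real.norm_eq_abs, Real.norm_eq_abs,
        abs_of_nonneg (Ec_nonneg a b j), abs_pow, abs_of_nonneg (by positivity : (0:ℝ) ≤ (j:ℝ))]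
      have hyR : |y| ≤ R := by
        have := Metric.mem_ball.mp hy
        rw [dist_zero_right, Real.norm_eq_abs] at this
        linarith
      calc Ec a b j * ((j:ℝ) * |y| ^ (j - 1))
          ≤ (1 / Nat.factorial j) * ((j:ℝ) * R ^ (j - 1)) := by
            apply mul_le_mul (Ec_le a b j) ?_ (by positivity) (by positivity)
            apply mul_le_mul_of_nonneg_left ?_ (by positivity)
            exact pow_le_pow_left₀ (abs_nonneg y) hyR _
        _ = (j : ℝ) * R ^ (j - 1) / Nat.factorial j := by ring
  have heq : (∑' j : ℕ, Ec a b j * ((j : ℝ) * x ^ (j - 1))) = Sf (a + 1) b x := by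
    have hs : Summable (fun j : ℕ => Ec a b j * ((j : ℝ) * x ^ (j - 1))) := by
      apply Summable.of_norm_bounded (summable_u |x|)
      intro j
      rw [norm_mul, norm_mul, Real.norm_eq_abs, Real.norm_eq_abs, Real.norm_eq_abs,
        abs_of_nonneg (Ec_nonneg a b j), abs_pow, abs_of_nonneg (by positivity : (0:ℝ) ≤ (j:ℝ))]
      calc Ec a b j * ((j:ℝ) * |x| ^ (j - 1))
          ≤ (1 / Nat.factorial j) * ((j:ℝ) * |x| ^ (j - 1)) :=
            mul_le_mul_of_nonneg_right (Ec_le a b j) (by positivity)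
        _ = (j : ℝ) * |x| ^ (j - 1) / Nat.factorial j := by ring
    rw [hs.tsum_eq_zero_add]
    simp only [Nat.cast_zero, zero_mul, mul_zero, zero_add]
    unfold Sf
    congr 1
    funext j
    have : ((j:ℕ) + 1 - 1) = j := rfl
    rw [this]
    push_cast
    calc Ec a b (j + 1) * (((j:ℝ) + 1) * x ^ j) = (((j:ℝ) + 1) * Ec a b (j + 1)) * x ^ j := by ring
      _ = Ec (a + 1) b j * x ^ j := by rw [Ec_succ]
  rw [← heq]
  exact key

lemma key_sum (a m : ℕ) : ∀ b : ℕ,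
    ∑ j ∈ range (m + 1), (-1:ℝ) ^ j * (m.choose j) *
      (Nat.factorial (b + j) / Nat.factorial (a + b + 1 + j))
    = Nat.factorial b * Nat.factorial (a + m) /
      (Nat.factorial a * Nat.factorial (a + b + 1 + m)) := by
  induction m with
  | zero =>
    intro b
    simp only [range_one, sum_singleton, pow_zero, Nat.choose_self, Nat.cast_one,
      one_mul, Nat.add_zero, zero_add]
    have h1 : (0:ℝ) < Nat.factorial a := by positivity
    have h2 : (0:ℝ) < Nat.factorial (a + b + 1) := by positivity
    field_simp
  | succ m ih =>
    intro b
    rw [Finset.sum_range_succ']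
    have expand : ∀ i ∈ range (m + 1), (-1:ℝ) ^ (i+1) * ((m+1).choose (i+1)) *
        (Nat.factorial (b + (i+1)) / Nat.factorial (a + b + 1 + (i+1)))
        = -((-1:ℝ) ^ i * (m.choose i) *
            (Nat.factorial (b + (i+1)) / Nat.factorial (a + b + 1 + (i+1))))
          + (-1:ℝ) ^ (i+1) * (m.choose (i+1)) *
            (Nat.factorial (b + (i+1)) / Nat.factorial (a + b + 1 + (i+1))) := by
      intro i _
      rw [Nat.choose_succ_succ]
      push_cast
      ring
    rw [Finset.sum_congr rfl expand, Finset.sum_add_distrib]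
    have h1 : ∑ i ∈ range (m + 1), -((-1:ℝ) ^ i * (m.choose i) *
        (Nat.factorial (b + (i+1)) / Nat.factorial (a + b + 1 + (i+1))))
        = -((Nat.factorial (b+1) : ℝ) * Nat.factorial (a + m) /
            (Nat.factorial a * Nat.factorial (a + (b+1) + 1 + m))) := by
      rw [Finset.sum_neg_distrib]
      congr 1
      rw [← ih (b+1)]
      apply Finset.sum_congr rfl
      intro i _
      have e1 : b + (i+1) = (b+1) + i := by omega
      have e2 : a + b + 1 + (i+1) = a + (b+1) + 1 + i := by omega
      rw [e1, e2]
    have h2 : (∑ i ∈ range (m + 1), (-1:ℝ) ^ (i+1) * (m.choose (i+1)) *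
        (Nat.factorial (b + (i+1)) / Nat.factorial (a + b + 1 + (i+1))))
        + (-1:ℝ) ^ 0 * ((m+1).choose 0) *
            (Nat.factorial (b + 0) / Nat.factorial (a + b + 1 + 0))
        = (Nat.factorial b : ℝ) * Nat.factorial (a + m) /
          (Nat.factorial a * Nat.factorial (a + b + 1 + m)) := by
      have e := Finset.sum_range_succ' (fun j => (-1:ℝ) ^ j * (m.choose j) *
        (Nat.factorial (b + j) / Nat.factorial (a + b + 1 + j))) (m + 1)
      rw [Finset.sum_range_succ] at e
      simp only [Nat.choose_succ_self, Nat.cast_zero, mul_zero, zero_mul, add_zero,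
        Nat.choose_zero_right, Nat.cast_one, pow_zero, one_mul] at e ⊢
      rw [← e, ih b]
    rw [h1, add_assoc, h2]
    have e3 : a + (b+1) + 1 + m = a + b + 2 + m := by omega
    have e4 : a + b + 1 + (m + 1) = a + b + 2 + m := by omega
    have e5 : a + (m + 1) = (a + m) + 1 := by omega
    have e6 : a + b + 2 + m = (a + b + 1 + m) + 1 := by omega
    rw [e3, e4, e5, e6, Nat.factorial_succ (a+m), Nat.factorial_succ (a+b+1+m),
      Nat.factorial_succ b]
    have p1 : (0:ℝ) < Nat.factorial a := by positivity
    have p2 : (0:ℝ) < Nat.factorial (a + b + 1 + m) := by positivity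
    push_cast
    field_simp
    ring
lemma summable_norm_exp (x : ℝ) : Summable (fun n : ℕ => ‖x ^ n / Nat.factorial n‖) := by
  have : (fun n : ℕ => ‖x ^ n / (Nat.factorial n : ℝ)‖)
      = fun n : ℕ => |x| ^ n / (Nat.factorial n : ℝ) := by
    funext n
    rw [norm_div, norm_pow, Real.norm_eq_abs, Real.norm_eq_abs,
      abs_of_nonneg (by positivity : (0:ℝ) ≤ (Nat.factorial n : ℝ))]
  rw [this]
  exact Real.summable_pow_div_factorial |x|

lemma exp_tsum (x : ℝ) : Real.exp x = ∑' n : ℕ, x ^ n / Nat.factorial n := by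
  rw [Real.exp_eq_exp_ℝ, NormedSpace.exp_eq_tsum_div]

lemma Sf_kummer (a b : ℕ) (x : ℝ) :
    Sf b a (-x) * Real.exp x
      = (Nat.factorial b / Nat.factorial a : ℝ) * Sf a b x := by
  rw [exp_tsum]
  unfold Sf
  rw [tsum_mul_tsum_eq_tsum_sum_antidiagonal_of_summable_norm
    (summable_norm_Ec b a (-x)) (summable_norm_exp x)]
  rw [← tsum_mul_left]
  apply tsum_congr
  intro m
  rw [Finset.Nat.sum_antidiagonal_eq_sum_range_succ
    (fun j i => (Ec b a j * (-x) ^ j) * (x ^ i / Nat.factorial i)) m]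
  have step : ∀ j ∈ range (m + 1),
      (Ec b a j * (-x) ^ j) * (x ^ (m - j) / Nat.factorial (m - j))
      = ((-1:ℝ) ^ j * (m.choose j) *
          (Nat.factorial (b + j) / Nat.factorial (a + b + 1 + j))) * (x ^ m / Nat.factorial m) := by
    intro j hj
    have hjm : j ≤ m := by
      have := Finset.mem_range.mp hj; omega
    have hc : (m.choose j : ℝ) = Nat.factorial m / (Nat.factorial j * Nat.factorial (m - j)) :=
      Nat.cast_choose ℝ hjm
    have hx : x ^ j * x ^ (m - j) = x ^ m := by
      rw [← pow_add]
      congr 1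
      omega
    have e1 : b + a + 1 + j = a + b + 1 + j := by omega
    unfold Ec
    rw [e1, hc, neg_pow, ← hx]
    have p1 : (0:ℝ) < Nat.factorial j := by positivity
    have p2 : (0:ℝ) < Nat.factorial (m - j) := by positivity
    have p3 : (0:ℝ) < Nat.factorial m := by positivity
    have p4 : (0:ℝ) < Nat.factorial (a + b + 1 + j) := by positivity
    field_simp
  rw [Finset.sum_congr rfl step, ← Finset.sum_mul, key_sum a m b]
  unfold Ec
  have p1 : (0:ℝ) < Nat.factorial a := by positivity
  have p2 : (0:ℝ) < Nat.factorial m := by positivity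
  have p3 : (0:ℝ) < Nat.factorial (a + b + 1 + m) := by positivity
  field_simp

lemma Sf_nonneg (a b : ℕ) (x : ℝ) : 0 ≤ Sf a b x := by
  rcases le_or_gt 0 x with hx | hx
  · apply tsum_nonneg
    intro j
    exact mul_nonneg (Ec_nonneg a b j) (by positivity)
  · have h := Sf_kummer b a (-x)
    rw [neg_neg] at h
    have h1 : 0 ≤ Sf b a (-x) := by
      apply tsum_nonneg
      intro j
      exact mul_nonneg (Ec_nonneg b a j) (pow_nonneg (by linarith) j)
    have h2 : 0 ≤ Sf a b x * Real.exp (-x) := by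
      rw [h]
      exact mul_nonneg (by positivity) h1
    exact le_of_mul_le_mul_right (by simpa using h2) (Real.exp_pos (-x))

lemma Ec_zero_left (n j : ℕ) : Ec 0 n j = 1 / Nat.factorial (n + 1 + j) := by
  unfold Ec
  have e1 : 0 + j = j := by omega
  have e2 : 0 + n + 1 + j = n + 1 + j := by omega
  rw [e1, e2]
  have p1 : (0:ℝ) < Nat.factorial j := by positivity
  have p2 : (0:ℝ) < Nat.factorial (n + 1 + j) := by positivity
  field_simp

lemma E_eq_Sf (n : ℕ) (x : ℝ) : E n x = (Nat.factorial (n + 1) : ℝ) * Sf 0 n x := by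
  have hSf : Sf 0 n x = ∑' j : ℕ, x ^ j / Nat.factorial (n + 1 + j) := by
    unfold Sf
    apply tsum_congr
    intro j
    rw [Ec_zero_left]
    ring
  by_cases hx : x = 0
  · subst hx
    rw [E, if_pos rfl, hSf]
    rw [tsum_eq_single 0 (fun j hj => by rw [zero_pow hj, zero_div])]
    simp [Nat.add_zero]
    rw [mul_inv_cancel₀ (by positivity : ((Nat.factorial (n+1)):ℝ) ≠ 0)]
  · rw [E, if_neg hx, hSf]
    have tail : Real.exp x - ∑ k ∈ Finset.range (n + 1), x ^ k / (Nat.factorial k)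
        = ∑' j : ℕ, x ^ (j + (n + 1)) / Nat.factorial (j + (n + 1)) := by
      have hs : Summable (fun k : ℕ => x ^ k / (Nat.factorial k : ℝ)) :=
        (summable_norm_exp x).of_norm
      have := Summable.sum_add_tsum_nat_add (f := fun k : ℕ => x ^ k / (Nat.factorial k : ℝ)) (n + 1) hs
      rw [exp_tsum, ← this]
      ring
    rw [tail]
    have reidx : (∑' j : ℕ, x ^ (j + (n + 1)) / Nat.factorial (j + (n + 1)))
        = x ^ (n + 1) * ∑' j : ℕ, x ^ j / Nat.factorial (n + 1 + j) := by
      rw [← tsum_mul_left]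
      apply tsum_congr
      intro j
      rw [show j + (n + 1) = n + 1 + j from by omega, pow_add]
      ring
    rw [reidx]
    have hxp : (x : ℝ) ^ (n + 1) ≠ 0 := pow_ne_zero _ hx
    field_simp

lemma iteratedDeriv_const_mul_Sf (C : ℝ) (a b : ℕ) :
    ∀ k : ℕ, iteratedDeriv k (fun x => C * Sf a b x) = fun x => C * Sf (a + k) b x := by
  intro k
  induction k with
  | zero => simp
  | succ k ih =>
    rw [iteratedDeriv_succ, ih]
    funext x
    have h : HasDerivAt (fun y => C * Sf (a + k) b y) (C * Sf (a + k + 1) b x) x :=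
      (hasDerivAt_Sf (a + k) b x).const_mul C
    rw [h.deriv, show a + (k + 1) = a + k + 1 from by omega]

theorem E_absolutely_monotonic (n : ℕ) (k : ℕ) (x : ℝ) :
    0 ≤ iteratedDeriv k (E n) x := by
  have hE : E n = fun x => (Nat.factorial (n + 1) : ℝ) * Sf 0 n x := funext (E_eq_Sf n)
  rw [hE, iteratedDeriv_const_mul_Sf]
  have : 0 + k = k := by omega
  rw [this]
  exact mul_nonneg (by positivity) (Sf_nonneg k n x)
end
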